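/- arXiv:2103.16416 — 10 statements merged into one kernel-verified Lean document; each statement's English description precedes it below -/
import Mathlib

section
/- Let G=(V,A) be a finite directed graph, v ∈ V a vertex, and suppose V is partitioned into k non-empty modules V = M_1 ⊎ M_2 ⊎ … ⊎ M_k. If v is a Slater winner of G, then there exists a winning ordering for v such that for all i ∈ {1,…,k}, the set M_i is contiguous. -/
/-- The feedback arc set implied by an ordering `r`: arcs of `A` whose endpoints
are reversed by `r`. -/
def fasSet {V : Type*} (A r : V → V → Prop) : Set (V × V) := {p | A p.1 p.2 ∧ r p.2 p.1}

/-- `r` is an optimal ordering for the digraph `(V, A)`: it is a strict linear order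
whose implied feedback arc set has minimum size. -/
def IsOptimalOrder {V : Type*} (A r : V → V → Prop) : Prop :=
  IsStrictTotalOrder V r ∧
    ∀ r' : V → V → Prop, IsStrictTotalOrder V r' → (fasSet A r).ncard ≤ (fasSet A r').ncard

/-- `r` places `v` last. -/
def PlacesLast {V : Type*} (r : V → V → Prop) (v : V) : Prop := ∀ u, u ≠ v → r u v

/-- `v` is a Slater winner: some optimal order places `v` last. -/
def SlaterWinner {V : Type*} (A : V → V → Prop) (v : V) : Prop :=
  ∃ r : V → V → Prop, IsOptimalOrder A r ∧ PlacesLast r v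

/-- `M` is a module of the digraph `(V, A)`. -/
def IsModule {V : Type*} (A : V → V → Prop) (M : Set V) : Prop :=
  ∀ x ∈ M, ∀ y ∈ M, ∀ z ∉ M, (A x z ↔ A y z) ∧ (A z x ↔ A z y)

/-- `S` is contiguous in the ordering `r`. -/
def Contig {V : Type*} (r : V → V → Prop) (S : Set V) : Prop :=
  ¬ ∃ x ∈ S, ∃ y ∈ S, ∃ z, z ∉ S ∧ r x z ∧ r z y

/- ---------------------------------------------------------------------------
   Auxiliary machinery
--------------------------------------------------------------------------- -/

open Finset
set_option linter.unusedSectionVars false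
set_option maxHeartbeats 1000000

/-- The strict order on `V` induced by an (injective) map into a linear order. -/
def relOf {V L : Type*} [LT L] (f : V → L) : V → V → Prop := fun x y => f x < f y

open scoped Classical in
/-- ℕ-valued indicator of a proposition. -/
noncomputable def ind (P : Prop) : ℕ := if P then 1 else 0

lemma ind_congr {P Q : Prop} (h : P ↔ Q) : ind P = ind Q := congrArg ind (propext h)

lemma ite_eq_ind (P : Prop) [Decidable P] : (if P then (1:ℕ) else 0) = ind P := by
  by_cases h : P <;> simp [ind, h]

section Aux

variable {V : Type*} [Fintype V] {L : Type*} [LinearOrder L]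

open scoped Classical

lemma sto_relOf {f : V → L} (hf : Function.Injective f) :
    IsStrictTotalOrder V (relOf f) := by
  refine { trichotomous := ?_, irrefl := ?_, trans := ?_ }
  · intro x y
    rcases lt_trichotomy (f x) (f y) with h | h | h
    · exact fun h1 _ => absurd h h1
    · exact fun _ _ => hf h
    · exact fun _ h2 => absurd h h2
  · exact fun x => lt_irrefl (f x)
  · exact fun x y z => lt_trans

lemma exists_repr (r : V → V → Prop) (h : IsStrictTotalOrder V r) :
    ∃ f : V → Fin (Fintype.card V), Function.Injective f ∧ r = relOf f := by
  haveI := h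
  letI : LinearOrder V := linearOrderOfSTO r
  let e := monoEquivOfFin V rfl
  refine ⟨fun x => e.symm x, e.symm.injective, ?_⟩
  funext x y
  exact propext ((show r x y ↔ x < y from Iff.rfl).trans (e.symm.lt_iff_lt).symm)

/-- Move the module `M` to the position of `w ∈ M`, keeping all relative orders. -/
noncomputable def mv (f : V → L) (M : Set V) (w : V) : V → L ×ₗ L :=
  fun x => toLex (if x ∈ M then (f w, f x) else (f x, f x))

variable {f : V → L} {M : Set V} {w : V}

lemma mv_lt_mm {x y : V} (hx : x ∈ M) (hy : y ∈ M) :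
    mv f M w x < mv f M w y ↔ f x < f y := by
  simp [mv, hx, hy, Prod.Lex.lt_iff]

lemma mv_lt_oo {x y : V} (hx : x ∉ M) (hy : y ∉ M) :
    mv f M w x < mv f M w y ↔ f x < f y := by
  simp only [mv, if_neg hx, if_neg hy, Prod.Lex.lt_iff]
  constructor
  · rintro (h | ⟨-, h⟩) <;> exact h
  · exact fun h => Or.inl h

lemma mv_lt_mo {x z : V} (hf : Function.Injective f) (hw : w ∈ M) (hx : x ∈ M) (hz : z ∉ M) :
    mv f M w x < mv f M w z ↔ f w < f z := by
  have : f w ≠ f z := fun h => hz (hf h ▸ hw)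
  simp [mv, hx, hz, Prod.Lex.lt_iff, this]

lemma mv_lt_om {x z : V} (hf : Function.Injective f) (hw : w ∈ M) (hz : z ∉ M) (hx : x ∈ M) :
    mv f M w z < mv f M w x ↔ f z < f w := by
  have : f z ≠ f w := fun h => hz (hf h ▸ hw)
  simp [mv, hx, hz, Prod.Lex.lt_iff, this]

lemma mv_inj (hf : Function.Injective f) (hw : w ∈ M) : Function.Injective (mv f M w) := by
  intro a b hab
  by_cases ha : a ∈ M <;> by_cases hb : b ∈ M <;>
    simp only [mv, ha, hb, if_true, if_false, ite_true, ite_false, toLex_inj,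
      Prod.mk.injEq] at hab
  · exact hf hab.2
  · exact absurd (hf hab.1) (fun h : w = b => hb (h ▸ hw))
  · exact absurd (hf hab.1.symm) (fun h : w = a => ha (h ▸ hw))
  · exact hf hab.1

lemma ncard_fas (A : V → V → Prop) (r : V → V → Prop) :
    (fasSet A r).ncard = ∑ x : V, ∑ y : V, ind (A x y ∧ r y x) := by
  have h : fasSet A r = ↑(Finset.univ.filter fun p : V × V => A p.1 p.2 ∧ r p.2 p.1) := by
    ext p; simp [fasSet]
  rw [h, Set.ncard_coe_finset, Finset.card_filter, ← Finset.univ_product_univ,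
    Finset.sum_product]
  exact Finset.sum_congr rfl fun x _ => Finset.sum_congr rfl fun y _ => ite_eq_ind _

/-- The cost of all arcs between `M` and its complement. -/
noncomputable def crossC (A : V → V → Prop) (M : Set V) (f : V → L) : ℕ :=
  ∑ x ∈ univ.filter (· ∈ M), ∑ z ∈ univ.filter (· ∉ M),
    (ind (A x z ∧ f z < f x) + ind (A z x ∧ f x < f z))

lemma cost_decomp (A : V → V → Prop) (M : Set V) (f : V → L) : ∀ Mf Cf : Finset V,
    Mf = univ.filter (· ∈ M) → Cf = univ.filter (· ∉ M) →
    (fasSet A (relOf f)).ncard =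
      (∑ x ∈ Mf, ∑ y ∈ Mf, ind (A x y ∧ f y < f x))
      + (∑ x ∈ Cf, ∑ y ∈ Cf, ind (A x y ∧ f y < f x))
      + crossC A M f := by
  intro Mf Cf hMf hCf
  rw [ncard_fas]
  have hsplit : ∀ F : V → ℕ, (∑ x : V, F x) = (∑ x ∈ Mf, F x) + (∑ x ∈ Cf, F x) := by
    intro F
    rw [hMf, hCf]
    exact (Finset.sum_filter_add_sum_filter_not univ (· ∈ M) F).symm
  rw [hsplit (fun x => ∑ y : V, ind (A x y ∧ relOf f y x))]
  have h1 : ∀ x : V, (∑ y : V, ind (A x y ∧ relOf f y x))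
      = (∑ y ∈ Mf, ind (A x y ∧ f y < f x)) + (∑ y ∈ Cf, ind (A x y ∧ f y < f x)) :=
    fun x => hsplit (fun y => ind (A x y ∧ f y < f x))
  simp only [h1, Finset.sum_add_distrib]
  have hcross : crossC A M f = (∑ x ∈ Mf, ∑ z ∈ Cf, ind (A x z ∧ f z < f x))
      + (∑ x ∈ Cf, ∑ y ∈ Mf, ind (A x y ∧ f y < f x)) := by
    rw [crossC, ← hMf, ← hCf, Finset.sum_comm (s := Cf) (t := Mf)
      (f := fun x y => ind (A x y ∧ f y < f x))]
    rw [← Finset.sum_add_distrib]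
    exact Finset.sum_congr rfl fun x _ => by rw [← Finset.sum_add_distrib]
  rw [hcross]; ring

lemma cost_split (A : V → V → Prop) (M : Set V) {L' : Type*} [LinearOrder L']
    (f : V → L) (g : V → L')
    (hin : ∀ x ∈ M, ∀ y ∈ M, (f y < f x ↔ g y < g x))
    (hout : ∀ x ∉ M, ∀ y ∉ M, (f y < f x ↔ g y < g x)) :
    (fasSet A (relOf g)).ncard + crossC A M f = (fasSet A (relOf f)).ncard + crossC A M g := by
  rw [cost_decomp A M f _ _ rfl rfl, cost_decomp A M g _ _ rfl rfl]
  have e1 : (∑ x ∈ univ.filter (· ∈ M), ∑ y ∈ univ.filter (· ∈ M), ind (A x y ∧ f y < f x)) =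
      (∑ x ∈ univ.filter (· ∈ M), ∑ y ∈ univ.filter (· ∈ M), ind (A x y ∧ g y < g x)) := by
    refine Finset.sum_congr rfl fun x hx => Finset.sum_congr rfl fun y hy => ?_
    simp only [mem_filter, mem_univ, true_and] at hx hy
    exact ind_congr (and_congr_right fun _ => hin x hx y hy)
  have e2 : (∑ x ∈ univ.filter (· ∉ M), ∑ y ∈ univ.filter (· ∉ M), ind (A x y ∧ f y < f x)) =
      (∑ x ∈ univ.filter (· ∉ M), ∑ y ∈ univ.filter (· ∉ M), ind (A x y ∧ g y < g x)) := by
    refine Finset.sum_congr rfl fun x hx => Finset.sum_congr rfl fun y hy => ?_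
    simp only [mem_filter, mem_univ, true_and] at hx hy
    exact ind_congr (and_congr_right fun _ => hout x hx y hy)
  rw [e1, e2]; ring

lemma cross_eval (A : V → V → Prop) (M : Set V) (f : V → L)
    (hne : ∀ x ∈ M, ∀ z ∉ M, f x ≠ f z) : ∀ Mf Cf : Finset V,
    Mf = univ.filter (· ∈ M) → Cf = univ.filter (· ∉ M) →
    crossC A M f = ∑ x ∈ Mf, ∑ z ∈ Cf,
      (if f x < f z then ind (A z x) else ind (A x z)) := by
  intro Mf Cf hMf hCf
  rw [crossC, ← hMf, ← hCf]
  refine Finset.sum_congr rfl fun x hx => Finset.sum_congr rfl fun z hz => ?_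
  rw [hMf] at hx; rw [hCf] at hz
  simp only [mem_filter, mem_univ, true_and] at hx hz
  rcases lt_trichotomy (f x) (f z) with h | h | h
  · rw [if_pos h]
    have h2 : ¬ f z < f x := lt_asymm h
    have e1 : ind (A x z ∧ f z < f x) = 0 := by simp [ind, h2]
    have e2 : ind (A z x ∧ f x < f z) = ind (A z x) := ind_congr (and_iff_left h)
    omega
  · exact absurd h (hne x hx z hz)
  · rw [if_neg (lt_asymm h)]
    have e1 : ind (A x z ∧ f z < f x) = ind (A x z) := ind_congr (and_iff_left h)
    have e2 : ind (A z x ∧ f x < f z) = 0 := by simp [ind, lt_asymm h]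
    omega

lemma cross_mv (A : V → V → Prop) (M : Set V) (f : V → L)
    (hf : Function.Injective f) (hw : w ∈ M) :
    crossC A M (mv f M w) = ∑ x ∈ univ.filter (· ∈ M), ∑ z ∈ univ.filter (· ∉ M),
      (if f w < f z then ind (A z x) else ind (A x z)) := by
  have hne : ∀ x ∈ M, ∀ z ∉ M, mv f M w x ≠ mv f M w z := by
    intro x hx z hz h
    exact hz ((mv_inj hf hw h) ▸ hx)
  rw [cross_eval A M (mv f M w) hne _ _ rfl rfl]
  refine Finset.sum_congr rfl fun x hx => Finset.sum_congr rfl fun z hz => ?_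
  simp only [mem_filter, mem_univ, true_and] at hx hz
  rw [if_congr (mv_lt_mo hf hw hx hz) rfl rfl]

lemma avg_cross (A : V → V → Prop) (M : Set V) (hM : IsModule A M) (f : V → L)
    (hf : Function.Injective f) :
    ∑ w ∈ univ.filter (· ∈ M), crossC A M (mv f M w)
      = ∑ w ∈ univ.filter (· ∈ M), crossC A M f := by
  have hne : ∀ x ∈ M, ∀ z ∉ M, f x ≠ f z := by
    intro x hx z hz h; exact hz (hf h ▸ hx)
  have step1 : ∀ w ∈ univ.filter (· ∈ M),
      crossC A M (mv f M w) = (univ.filter (· ∈ M)).card *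
        (∑ z ∈ univ.filter (· ∉ M), (if f w < f z then ind (A z w) else ind (A w z))) := by
    intro w hw
    simp only [mem_filter, mem_univ, true_and] at hw
    rw [cross_mv A M f hf hw]
    have : ∀ x ∈ univ.filter (· ∈ M),
        (∑ z ∈ univ.filter (· ∉ M), (if f w < f z then ind (A z x) else ind (A x z)))
        = (∑ z ∈ univ.filter (· ∉ M), (if f w < f z then ind (A z w) else ind (A w z))) := by
      intro x hx
      simp only [mem_filter, mem_univ, true_and] at hx
      refine Finset.sum_congr rfl fun z hz => ?_
      simp only [mem_filter, mem_univ, true_and] at hz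
      rw [if_congr Iff.rfl (ind_congr (hM x hx w hw z hz).2) (ind_congr (hM x hx w hw z hz).1)]
    rw [Finset.sum_congr rfl this, Finset.sum_const, smul_eq_mul]
  rw [Finset.sum_congr rfl step1]
  have hcf : ∀ w ∈ univ.filter (· ∈ M), crossC A M f
      = ∑ x ∈ univ.filter (· ∈ M), ∑ z ∈ univ.filter (· ∉ M),
          (if f x < f z then ind (A z x) else ind (A x z)) :=
    fun w _ => cross_eval A M f hne _ _ rfl rfl
  rw [Finset.sum_congr rfl hcf, ← Finset.mul_sum, Finset.sum_const, smul_eq_mul]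

/-- The main single-module step. -/
lemma step_lemma (A : V → V → Prop) (M : Set V) (hM : IsModule A M) (hMne : M.Nonempty)
    (v : V) (r : V → V → Prop) (hopt : IsOptimalOrder A r) (hlast : PlacesLast r v) :
    ∃ r' : V → V → Prop, IsOptimalOrder A r' ∧ PlacesLast r' v ∧ Contig r' M ∧
      ∀ S : Set V, (∀ a ∈ S, a ∉ M) → Contig r S → Contig r' S := by
  obtain ⟨f, hfinj, rfl⟩ := exists_repr r hopt.1
  have hMfne : (univ.filter (· ∈ M)).Nonempty := by
    obtain ⟨a, ha⟩ := hMne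
    exact ⟨a, by simp [ha]⟩
  -- choose the cut point w
  have hw : ∃ w ∈ M, (v ∈ M → w = v) ∧
      (fasSet A (relOf (mv f M w))).ncard ≤ (fasSet A (relOf f)).ncard := by
    have hid : ∀ w, w ∈ M →
        (fasSet A (relOf (mv f M w))).ncard + crossC A M f
          = (fasSet A (relOf f)).ncard + crossC A M (mv f M w) := by
      intro w hwM
      refine cost_split A M f (mv f M w) ?_ ?_
      · exact fun x hx y hy => (mv_lt_mm hy hx).symm
      · exact fun x hx y hy => (mv_lt_oo hy hx).symm
    by_cases hvM : v ∈ M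
    · -- use w = v; optimality forces equality of costs
      refine ⟨v, hvM, fun _ => rfl, ?_⟩
      have hvMf : v ∈ univ.filter (· ∈ M) := by simp [hvM]
      have hle : ∀ w ∈ univ.filter (· ∈ M), crossC A M f ≤ crossC A M (mv f M w) := by
        intro w hwMf
        simp only [mem_filter, mem_univ, true_and] at hwMf
        have h1 := hopt.2 (relOf (mv f M w)) (sto_relOf (mv_inj hfinj hwMf))
        have h2 := hid w hwMf
        omega
      have havg := avg_cross A M hM f hfinj
      have heq : crossC A M (mv f M v) = crossC A M f := by
        by_contra hne
        have hlt : crossC A M f < crossC A M (mv f M v) :=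
          lt_of_le_of_ne (hle v hvMf) (Ne.symm hne)
        have : ∑ w ∈ univ.filter (· ∈ M), crossC A M f
            < ∑ w ∈ univ.filter (· ∈ M), crossC A M (mv f M w) :=
          Finset.sum_lt_sum (fun i hi => hle i hi) ⟨v, hvMf, hlt⟩
        omega
      have := hid v hvM
      omega
    · -- choose w minimizing the new cross cost
      have havg := avg_cross A M hM f hfinj
      obtain ⟨w, hwMf, hwle⟩ := Finset.exists_le_of_sum_le hMfne (le_of_eq havg)
      simp only [mem_filter, mem_univ, true_and] at hwMf
      have h2 := hid w hwMf
      exact ⟨w, hwMf, fun hv => absurd hv hvM, by omega⟩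
  obtain ⟨w, hwM, hwv, hcost⟩ := hw
  refine ⟨relOf (mv f M w), ?_, ?_, ?_, ?_⟩
  · exact ⟨sto_relOf (mv_inj hfinj hwM),
      fun r'' h'' => le_trans hcost (hopt.2 r'' h'')⟩
  · -- places v last
    intro u hu
    show mv f M w u < mv f M w v
    by_cases hvM : v ∈ M
    · have hwv' : w = v := hwv hvM
      by_cases huM : u ∈ M
      · exact (mv_lt_mm huM hvM).mpr (hlast u hu)
      · exact (mv_lt_om hfinj hwM huM hvM).mpr (hwv' ▸ hlast u hu)
    · by_cases huM : u ∈ M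
      · refine (mv_lt_mo hfinj hwM huM hvM).mpr ?_
        exact hlast w (fun h => hvM (h ▸ hwM))
      · exact (mv_lt_oo huM hvM).mpr (hlast u hu)
  · -- M is contiguous
    rintro ⟨x, hx, y, hy, z, hz, h1, h2⟩
    have haa : f w < f z := (mv_lt_mo hfinj hwM hx hz).mp h1
    have hb : f z < f w := (mv_lt_om hfinj hwM hz hy).mp h2
    exact lt_asymm haa hb
  · -- contiguity preservation
    intro S hSdisj hS
    rintro ⟨x, hx, y, hy, z, hz, h1, h2⟩
    have hxM : x ∉ M := hSdisj x hx
    have hyM : y ∉ M := hSdisj y hy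
    by_cases hzM : z ∈ M
    · have hwS : w ∉ S := fun h => hSdisj w h hwM
      have ha : f x < f w := (mv_lt_om hfinj hwM hxM hzM).mp h1
      have hb : f w < f y := (mv_lt_mo hfinj hwM hzM hyM).mp h2
      exact hS ⟨x, hx, y, hy, w, hwS, ha, hb⟩
    · have ha : f x < f z := (mv_lt_oo hxM hzM).mp h1
      have hb : f z < f y := (mv_lt_oo hzM hyM).mp h2
      exact hS ⟨x, hx, y, hy, z, hz, ha, hb⟩

end Aux

theorem stmt0 {V : Type*} [Fintype V] (A : V → V → Prop) (hA : Irreflexive A)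
    (v : V) (k : ℕ) (M : Fin k → Set V)
    (hne : ∀ i, (M i).Nonempty)
    (hdisj : ∀ i j, i ≠ j → Disjoint (M i) (M j))
    (hcover : (⋃ i, M i) = Set.univ)
    (hmod : ∀ i, IsModule A (M i))
    (hwin : SlaterWinner A v) :
    ∃ r : V → V → Prop, IsOptimalOrder A r ∧ PlacesLast r v ∧ ∀ i, Contig r (M i) := by
  have main : ∀ n : ℕ, ∃ r : V → V → Prop, IsOptimalOrder A r ∧ PlacesLast r v ∧
      ∀ i : Fin k, (i : ℕ) < n → Contig r (M i) := by
    intro n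
    induction n with
    | zero =>
      obtain ⟨r, h1, h2⟩ := hwin
      exact ⟨r, h1, h2, fun i hi => absurd hi (Nat.not_lt_zero _)⟩
    | succ n ih =>
      obtain ⟨r, h1, h2, h3⟩ := ih
      by_cases hn : n < k
      · obtain ⟨r', o', l', c', pres⟩ :=
          step_lemma A (M ⟨n, hn⟩) (hmod _) (hne _) v r h1 h2
        refine ⟨r', o', l', ?_⟩
        intro i hi
        rcases Nat.lt_succ_iff_lt_or_eq.mp hi with h | h
        · refine pres (M i) ?_ (h3 i h)
          intro a ha ham
          have hij : i ≠ ⟨n, hn⟩ := by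
            intro he
            rw [he] at h
            exact lt_irrefl n h
          exact (Set.disjoint_left.mp (hdisj i ⟨n, hn⟩ hij)) ha ham
        · have : i = ⟨n, hn⟩ := Fin.ext h
          rw [this]; exact c'
      · refine ⟨r, h1, h2, fun i _ => h3 i ?_⟩
        exact lt_of_lt_of_le i.isLt (le_of_not_gt hn)
  obtain ⟨r, h1, h2, h3⟩ := main k
  exact ⟨r, h1, h2, fun i => h3 i i.isLt⟩
end

section
/- Let G=(V,A) be a finite directed graph and ≺ a linear order on V. Let x ∈ V and let Z ⊆ V be a nonempty set forming an interval of ≺ located immediately after x (i.e., Z = {u ∈ V : x ≺ u and u ⪯ z₀} for some z₀ ∈ Z). Let ≺' be the linear order obtained from ≺ by moving x to the position immediately after z₀, leaving the relative order of all other vertices unchanged. Then |fas(≺')| = |fas(≺)| + |{z ∈ Z : (x,z) ∈ A}| − |{z ∈ Z : (z,x) ∈ A}|. -/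
/-- Moving `x` to the position immediately after the interval
`Z = {u | x ≺ u and u ⪯ z₀}` changes the size of the implied feedback arc set by
`|{z ∈ Z : (x,z) ∈ A}| − |{z ∈ Z : (z,x) ∈ A}|` (stated additively to avoid
truncated subtraction). -/
theorem stmt1 {V : Type*} [Fintype V] (A : V → V → Prop) (hA : Irreflexive A)
    (r : V → V → Prop) (hr : IsStrictTotalOrder V r)
    (x z₀ : V) (Z : Set V)
    (hZdef : Z = {u | r x u ∧ (u = z₀ ∨ r u z₀)})
    (hz₀ : z₀ ∈ Z)
    (r' : V → V → Prop) (hr' : IsStrictTotalOrder V r')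
    (hfix : ∀ u v, u ≠ x → v ≠ x → (r' u v ↔ r u v))
    (hto : ∀ u, u ≠ x → (r' u x ↔ (u = z₀ ∨ r u z₀)))
    (hfrom : ∀ v, v ≠ x → (r' x v ↔ r z₀ v)) :
    (fasSet A r').ncard + {z ∈ Z | A z x}.ncard
      = (fasSet A r).ncard + {z ∈ Z | A x z}.ncard := by
  haveI := hr
  haveI := hr'
  have hxz₀ : r x z₀ := by rw [hZdef] at hz₀; exact hz₀.1
  set S₁ : Set (V × V) := (fun z => (z, x)) '' {z ∈ Z | A z x} with hS₁
  set S₂ : Set (V × V) := (fun z => (x, z)) '' {z ∈ Z | A x z} with hS₂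
  have hsub : S₁ ⊆ fasSet A r := by
    rintro _ ⟨z, ⟨hzZ, hAzx⟩, rfl⟩
    rw [hZdef] at hzZ
    exact ⟨hAzx, hzZ.1⟩
  have hdisj : Disjoint S₂ (fasSet A r) := by
    rw [Set.disjoint_left]
    rintro _ ⟨z, ⟨hzZ, hAxz⟩, rfl⟩ ⟨_, hrzx⟩
    rw [hZdef] at hzZ
    exact asymm_of r hzZ.1 hrzx
  have hmain : fasSet A r' = (fasSet A r \ S₁) ∪ S₂ := by
    ext ⟨u, v⟩
    constructor
    · rintro ⟨ha, hvu⟩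
      by_cases hu : u = x
      · subst hu
        -- here x has been replaced by u
        have hv : v ≠ u := fun h => hA u (h ▸ ha)
        have hvz : v = z₀ ∨ r v z₀ := (hto v hv).mp hvu
        rcases trichotomous_of r u v with hxv | heq | hvx
        · right
          exact ⟨v, ⟨by rw [hZdef]; exact ⟨hxv, hvz⟩, ha⟩, rfl⟩
        · exact absurd heq.symm hv
        · left
          refine ⟨⟨ha, hvx⟩, ?_⟩
          rintro ⟨z, ⟨hzZ, _⟩, heq⟩
          obtain ⟨h1, h2⟩ := Prod.mk.injEq .. |>.mp heq
          subst h1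
          rw [hZdef] at hzZ
          exact irrefl_of r z hzZ.1
      · by_cases hv : v = x
        · subst hv
          -- x replaced by v
          have hz₀u : r z₀ u := (hfrom u hu).mp hvu
          left
          refine ⟨⟨ha, trans_of r hxz₀ hz₀u⟩, ?_⟩
          rintro ⟨z, ⟨hzZ, _⟩, heq⟩
          obtain ⟨h1, h2⟩ := Prod.mk.injEq .. |>.mp heq
          subst h1
          rw [hZdef] at hzZ
          rcases hzZ.2 with h | h
          · exact irrefl_of r z₀ (h ▸ hz₀u)
          · exact asymm_of r h hz₀u
        · left
          refine ⟨⟨ha, (hfix v u hv hu).mp hvu⟩, ?_⟩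
          rintro ⟨z, ⟨_, _⟩, heq⟩
          exact hv ((Prod.mk.injEq .. |>.mp heq).2.symm)
    · rintro (⟨⟨ha, hvu⟩, hnS₁⟩ | ⟨z, ⟨hzZ, hAxz⟩, heq⟩)
      · by_cases hu : u = x
        · subst hu
          have hv : v ≠ u := fun h => hA u (h ▸ ha)
          exact ⟨ha, (hto v hv).mpr (Or.inr (trans_of r hvu hxz₀))⟩
        · by_cases hv : v = x
          · subst hv
            have huZ : ¬ (u = z₀ ∨ r u z₀) := by
              intro h
              exact hnS₁ ⟨u, ⟨by rw [hZdef]; exact ⟨hvu, h⟩, ha⟩, rfl⟩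
            have hz₀u : r z₀ u := by
              rcases trichotomous_of r z₀ u with h | h | h
              · exact h
              · exact absurd (Or.inl h.symm) huZ
              · exact absurd (Or.inr h) huZ
            exact ⟨ha, (hfrom u hu).mpr hz₀u⟩
          · exact ⟨ha, (hfix v u hv hu).mpr hvu⟩
      · obtain ⟨h1, h2⟩ := Prod.mk.injEq .. |>.mp heq
        subst h1
        subst h2
        have hz : z ≠ x := by
          rw [hZdef] at hzZ
          exact fun h => irrefl_of r x (h ▸ hzZ.1)
        have hzz₀ : z = z₀ ∨ r z z₀ := by rw [hZdef] at hzZ; exact hzZ.2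
        exact ⟨hAxz, (hto z hz).mpr hzz₀⟩
  have hcard₁ : S₁.ncard = {z ∈ Z | A z x}.ncard :=
    Set.ncard_image_of_injective _ (fun a b h => ((Prod.mk.injEq ..).mp h).1)
  have hcard₂ : S₂.ncard = {z ∈ Z | A x z}.ncard :=
    Set.ncard_image_of_injective _ (fun a b h => ((Prod.mk.injEq ..).mp h).2)
  have hfin : (fasSet A r).Finite := Set.toFinite _
  have hdisj' : Disjoint (fasSet A r \ S₁) S₂ :=
    (hdisj.mono_right Set.diff_subset).symm
  rw [hmain, Set.ncard_union_eq hdisj' (Set.toFinite _) (Set.toFinite _),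
    ← hcard₁, ← hcard₂]
  have : (fasSet A r \ S₁).ncard + S₁.ncard = (fasSet A r).ncard := by
    rw [← Set.ncard_union_eq (Set.disjoint_sdiff_left) (Set.toFinite _) (Set.toFinite _),
      Set.diff_union_of_subset hsub]
  omega
end

section
/- Let G=(V,A) be a finite directed graph and ≺ a linear order on V. Let X, Z ⊆ V be disjoint nonempty sets such that X is an interval of ≺ and Z is the interval of ≺ immediately following X. Suppose that for every x ∈ X, |{z ∈ Z : (z,x) ∈ A}| = |{z ∈ Z : (x,z) ∈ A}|. Then the linear order ≺' obtained from ≺ by swapping the intervals X and Z (moving all of X immediately after the last element of Z, preserving the internal order of X, the internal order of Z, and the positions of all other vertices) satisfies |fas(≺')| = |fas(≺)|. -/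
private lemma fiber_card {V : Type*} [Fintype V] (P : V → V → Prop) :
    {p : V × V | P p.1 p.2}.ncard = ∑ x : V, {z : V | P x z}.ncard := by
  classical
  have e1 : {p : V × V | P p.1 p.2}
      = ↑(Finset.univ.filter fun p : V × V => P p.1 p.2) := by
    ext p; simp
  have e2 : ∀ x : V, {z : V | P x z} = ↑(Finset.univ.filter fun z : V => P x z) := by
    intro x; ext z; simp
  rw [e1, Set.ncard_coe_finset]
  simp only [e2, Set.ncard_coe_finset]
  rw [Finset.card_eq_sum_card_fiberwise (f := Prod.fst) (t := Finset.univ)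
    (fun p _ => Finset.mem_univ _)]
  refine Finset.sum_congr rfl fun x _ => ?_
  refine Finset.card_bij (fun p _ => p.2) ?_ ?_ ?_
  · intro p hp
    simp only [Finset.mem_filter, Finset.mem_univ, true_and] at hp ⊢
    rw [← hp.2]; exact hp.1
  · intro p hp q hq h
    simp only [Finset.mem_filter] at hp hq
    exact Prod.ext (hp.2.trans hq.2.symm) h
  · intro z hz
    simp only [Finset.mem_filter, Finset.mem_univ, true_and] at hz
    exact ⟨(x, z), by simp [hz], rfl⟩

/-- Swapping two adjacent intervals `X` and `Z`, where every `x ∈ X` has equally many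
in- and out-arcs towards `Z`, preserves the size of the implied feedback arc set. -/
theorem stmt2 {V : Type*} [Fintype V] (A : V → V → Prop) (hA : Irreflexive A)
    (r : V → V → Prop) (hr : IsStrictTotalOrder V r)
    (X Z : Set V) (hXne : X.Nonempty) (hZne : Z.Nonempty) (hdisj : Disjoint X Z)
    (hContigX : Contig r X) (hContigZ : Contig r Z)
    (hXZ : ∀ a ∈ X, ∀ z ∈ Z, r a z)
    (hadj : ∀ u, u ∉ X → u ∉ Z → (∀ a ∈ X, r u a) ∨ (∀ z ∈ Z, r z u))
    (hbal : ∀ x ∈ X, {z ∈ Z | A z x}.ncard = {z ∈ Z | A x z}.ncard)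
    (r' : V → V → Prop)
    (hr'def : ∀ u v, r' u v ↔ ((u ∈ Z ∧ v ∈ X) ∨ (r u v ∧ ¬(u ∈ X ∧ v ∈ Z)))) :
    (fasSet A r').ncard = (fasSet A r).ncard := by
  classical
  haveI := hr
  have hasym : ∀ u v, r u v → ¬ r v u := fun u v h h' => (irrefl_of r u) (trans_of r h h')
  set B : Set (V × V) := {p | A p.1 p.2 ∧ p.1 ∈ Z ∧ p.2 ∈ X} with hB
  set C : Set (V × V) := {p | A p.1 p.2 ∧ p.1 ∈ X ∧ p.2 ∈ Z} with hC
  -- the set identity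
  have hset : fasSet A r' = (fasSet A r \ B) ∪ C := by
    ext ⟨u, v⟩
    simp only [fasSet, hB, hC, Set.mem_setOf_eq, Set.mem_union, Set.mem_diff]
    rw [hr'def]
    constructor
    · rintro ⟨ha, hv | ⟨hrvu, hn⟩⟩
      · exact Or.inr ⟨ha, hv.2, hv.1⟩
      · exact Or.inl ⟨⟨ha, hrvu⟩, fun h => hn ⟨h.2.2, h.2.1⟩⟩
    · rintro (⟨⟨ha, hrvu⟩, hn⟩ | ⟨ha, hu, hv⟩)
      · exact ⟨ha, Or.inr ⟨hrvu, fun h => hn ⟨ha, h.2, h.1⟩⟩⟩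
      · exact ⟨ha, Or.inl ⟨hv, hu⟩⟩
  have hBS : B ⊆ fasSet A r := by
    rintro ⟨u, v⟩ ⟨ha, hu, hv⟩
    exact ⟨ha, hXZ v hv u hu⟩
  have hCdisj : Disjoint C (fasSet A r \ B) := by
    rw [Set.disjoint_left]
    rintro ⟨u, v⟩ ⟨ha, hu, hv⟩ ⟨⟨_, hrvu⟩, _⟩
    exact hasym u v (hXZ u hu v hv) hrvu
  -- |B| = |C|
  have hBC : B.ncard = C.ncard := by
    have hBswap : B.ncard = (Prod.swap '' B).ncard :=
      (Set.ncard_image_of_injective B Prod.swap_injective).symm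
    have hBswap' : Prod.swap '' B = {p : V × V | A p.2 p.1 ∧ p.2 ∈ Z ∧ p.1 ∈ X} := by
      ext ⟨u, v⟩
      constructor
      · rintro ⟨⟨a, b⟩, hab, heq⟩; exact heq ▸ hab
      · rintro h; exact ⟨(v, u), h, rfl⟩
    rw [hBswap, hBswap', fiber_card (fun u v => A v u ∧ v ∈ Z ∧ u ∈ X),
      hC, fiber_card (fun u v => A u v ∧ u ∈ X ∧ v ∈ Z)]
    refine Finset.sum_congr rfl fun x _ => ?_
    by_cases hx : x ∈ X
    · have e1 : {z : V | A z x ∧ z ∈ Z ∧ x ∈ X} = {z ∈ Z | A z x} := by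
        ext z; simp only [Set.mem_setOf_eq]; tauto
      have e2 : {z : V | A x z ∧ x ∈ X ∧ z ∈ Z} = {z ∈ Z | A x z} := by
        ext z; simp only [Set.mem_setOf_eq]; tauto
      rw [e1, e2]; exact hbal x hx
    · have e1 : {z : V | A z x ∧ z ∈ Z ∧ x ∈ X} = ∅ := by
        ext z; simp only [Set.mem_setOf_eq, Set.mem_empty_iff_false]; tauto
      have e2 : {z : V | A x z ∧ x ∈ X ∧ z ∈ Z} = ∅ := by
        ext z; simp only [Set.mem_setOf_eq, Set.mem_empty_iff_false]; tauto
      rw [e1, e2]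
  -- finish arithmetic
  have hfin : (fasSet A r).Finite := Set.toFinite _
  have hle : B.ncard ≤ (fasSet A r).ncard := Set.ncard_le_ncard hBS hfin
  rw [hset, Set.ncard_union_eq hCdisj.symm (Set.toFinite _) (Set.toFinite _),
    Set.ncard_diff hBS (Set.toFinite _)]
  omega
end

section
/- Let S ⊆ {v_1,…,v_n} be an independent set of G with |S| = k. Define the assignment σ_S by σ_S(x_i^j) = True iff v_i ∈ S (for all i ∈ {1,…,n} and j ∈ {1,…,n+1}), and σ_S(y_i) = True iff |S ∩ {v_1,…,v_i}| is odd. Then σ_S is admissible, its weight equals k(n+1) + |{i ∈ {1,…,n} : |S ∩ {v_1,…,v_i}| is odd}| (in particular the weight is at least k(n+1) and at most k(n+1)+n), and σ_S(y_n) = True if and only if k is odd. -/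
/-- A truth assignment to the variables `x_i^j` (`i ∈ Fin n`, `j ∈ Fin (n+1)`) and
`y_i` (`i ∈ Fin n`) is admissible if: (a) all copies `x_i^j` of a variable agree;
(b) for every edge of `G` not both endpoints have a true copy; (c) `y_0 = x_0^0`
and `y_i = y_{i-1} XOR x_i^0` for `i ≥ 1`. -/
def Admissible {n : ℕ} (G : SimpleGraph (Fin n)) (σx : Fin n → Fin (n+1) → Bool)
    (σy : Fin n → Bool) : Prop :=
  (∀ i : Fin n, ∀ j k : Fin (n+1), σx i j = true → σx i k = true) ∧
  (∀ i₁ i₂ : Fin n, G.Adj i₁ i₂ → ∀ j k : Fin (n+1), ¬(σx i₁ j = true ∧ σx i₂ k = true)) ∧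
  (∀ i : Fin n, σy i =
    if (i : ℕ) = 0 then σx i 0
    else xor (σy ⟨(i : ℕ) - 1, lt_of_le_of_lt (Nat.sub_le _ _) i.isLt⟩) (σx i 0))

/-- The weight of an assignment: the number of variables set to `true`. -/
def aWeight {n : ℕ} (σx : Fin n → Fin (n+1) → Bool) (σy : Fin n → Bool) : ℕ :=
  (Finset.univ.filter (fun p : Fin n × Fin (n+1) => σx p.1 p.2 = true)).card +
    (Finset.univ.filter (fun i : Fin n => σy i = true)).card

theorem stmt3 {n : ℕ} (hn : 0 < n) (G : SimpleGraph (Fin n)) (S : Finset (Fin n))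
    (hInd : ∀ a ∈ S, ∀ b ∈ S, ¬ G.Adj a b) (k : ℕ) (hk : S.card = k)
    (σx : Fin n → Fin (n+1) → Bool) (σy : Fin n → Bool)
    (hσx : ∀ i j, σx i j = decide (i ∈ S))
    (hσy : ∀ i : Fin n, σy i = decide (Odd (S.filter (fun t => t ≤ i)).card)) :
    Admissible G σx σy ∧
    aWeight σx σy = k * (n + 1) +
      (Finset.univ.filter (fun i : Fin n => Odd (S.filter (fun t => t ≤ i)).card)).card ∧
    k * (n + 1) ≤ aWeight σx σy ∧ aWeight σx σy ≤ k * (n + 1) + n ∧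
    (σy ⟨n - 1, Nat.sub_lt hn one_pos⟩ = true ↔ Odd k) := by
  have hcard : ∀ i : Fin n, (i : ℕ) ≠ 0 →
      (S.filter (fun t => t ≤ i)).card =
      (S.filter (fun t => t ≤ (⟨(i : ℕ) - 1, lt_of_le_of_lt (Nat.sub_le _ _) i.isLt⟩ : Fin n))).card
        + (if i ∈ S then 1 else 0) := by
    intro i hi
    have hsplit : S.filter (fun t => t ≤ i) =
        (S.filter (fun t => t ≤ (⟨(i : ℕ) - 1, lt_of_le_of_lt (Nat.sub_le _ _) i.isLt⟩ : Fin n)))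
          ∪ (S.filter (fun t => t = i)) := by
      ext t
      simp only [Finset.mem_filter, Finset.mem_union, Fin.le_def, Fin.ext_iff]
      constructor
      · rintro ⟨ht, hle⟩
        rcases Nat.lt_or_ge (t : ℕ) (i : ℕ) with h | h
        · exact Or.inl ⟨ht, by omega⟩
        · exact Or.inr ⟨ht, by omega⟩
      · rintro (⟨ht, h⟩ | ⟨ht, h⟩) <;> exact ⟨ht, by omega⟩
    have hdisj : Disjoint
        (S.filter (fun t => t ≤ (⟨(i : ℕ) - 1, lt_of_le_of_lt (Nat.sub_le _ _) i.isLt⟩ : Fin n)))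
        (S.filter (fun t => t = i)) := by
      rw [Finset.disjoint_left]
      intro t ht1 ht2
      simp only [Finset.mem_filter, Fin.le_def, Fin.ext_iff] at ht1 ht2
      omega
    rw [hsplit, Finset.card_union_of_disjoint hdisj]
    congr 1
    by_cases hiS : i ∈ S
    · simp [Finset.filter_eq', hiS]
    · simp [Finset.filter_eq', hiS]
  have hlast : (S.filter (fun t => t ≤ (⟨n - 1, Nat.sub_lt hn one_pos⟩ : Fin n))) = S := by
    apply Finset.filter_true_of_mem
    intro t _
    simp only [Fin.le_def]
    have := t.isLt
    omega
  refine ⟨⟨?_, ?_, ?_⟩, ?_, ?_, ?_, ?_⟩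
  · intro i j k h
    rw [hσx] at h ⊢; exact h
  · intro i₁ i₂ hadj j k ⟨h1, h2⟩
    rw [hσx, decide_eq_true_eq] at h1 h2
    exact hInd _ h1 _ h2 hadj
  · intro i
    by_cases hi : (i : ℕ) = 0
    · rw [if_pos hi, hσy, hσx]
      have : S.filter (fun t => t ≤ i) = S.filter (fun t => t = i) := by
        ext t
        simp only [Finset.mem_filter, Fin.le_def, Fin.ext_iff, hi, Nat.le_zero]
      rw [this]
      by_cases hiS : i ∈ S
      · simp [Finset.filter_eq', hiS, Nat.odd_iff]
      · simp [Finset.filter_eq', hiS]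
    · rw [if_neg hi, hσy, hσy, hσx, hcard i hi]
      by_cases hiS : i ∈ S
      · simp [hiS, Nat.odd_add_one, Bool.xor_comm, ← Nat.not_odd_iff_even]
      · simp [hiS]
  · have hx : (Finset.univ.filter (fun p : Fin n × Fin (n+1) => σx p.1 p.2 = true)) =
        S ×ˢ (Finset.univ : Finset (Fin (n+1))) := by
      ext ⟨i, j⟩
      simp [hσx]
    have hy : (Finset.univ.filter (fun i : Fin n => σy i = true)) =
        (Finset.univ.filter (fun i : Fin n => Odd (S.filter (fun t => t ≤ i)).card)) := by
      apply Finset.filter_congr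
      intro i _
      simp [hσy]
    rw [aWeight, hx, hy, Finset.card_product, hk]
    simp
  · rw [aWeight]
    have hx : (Finset.univ.filter (fun p : Fin n × Fin (n+1) => σx p.1 p.2 = true)) =
        S ×ˢ (Finset.univ : Finset (Fin (n+1))) := by
      ext ⟨i, j⟩
      simp [hσx]
    rw [hx, Finset.card_product, hk]
    simp
  · rw [aWeight]
    have hx : (Finset.univ.filter (fun p : Fin n × Fin (n+1) => σx p.1 p.2 = true)) =
        S ×ˢ (Finset.univ : Finset (Fin (n+1))) := by
      ext ⟨i, j⟩
      simp [hσx]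
    rw [hx, Finset.card_product, hk]
    simp only [Finset.card_univ, Fintype.card_fin]
    have : (Finset.univ.filter (fun i : Fin n => σy i = true)).card ≤ n := by
      calc _ ≤ (Finset.univ : Finset (Fin n)).card := Finset.card_filter_le _ _
        _ = n := by simp
    omega
  · rw [hσy, hlast, hk, decide_eq_true_eq]
end

section
/- Let σ be an admissible assignment and let S = {v_i : σ(x_i^1) = True}. Then S is an independent set of G, the weight of σ satisfies |S|(n+1) ≤ weight(σ) ≤ |S|(n+1) + n, and σ(y_n) = True if and only if |S| is odd. -/
theorem stmt4 {n : ℕ} (hn : 0 < n) (G : SimpleGraph (Fin n))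
    (σx : Fin n → Fin (n+1) → Bool) (σy : Fin n → Bool)
    (hadm : Admissible G σx σy)
    (S : Finset (Fin n)) (hS : S = Finset.univ.filter (fun i => σx i 0 = true)) :
    (∀ a ∈ S, ∀ b ∈ S, ¬ G.Adj a b) ∧
    S.card * (n + 1) ≤ aWeight σx σy ∧ aWeight σx σy ≤ S.card * (n + 1) + n ∧
    (σy ⟨n - 1, Nat.sub_lt hn one_pos⟩ = true ↔ Odd S.card) := by
  obtain ⟨ha, hb, hc⟩ := hadm
  have hSmem : ∀ i : Fin n, i ∈ S ↔ σx i 0 = true := by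
    intro i; subst hS; simp
  have hx : (Finset.univ.filter (fun p : Fin n × Fin (n+1) => σx p.1 p.2 = true))
      = S ×ˢ (Finset.univ : Finset (Fin (n+1))) := by
    ext p
    simp only [Finset.mem_filter, Finset.mem_univ, true_and, Finset.mem_product, and_true]
    rw [hSmem]
    exact ⟨fun h => ha p.1 p.2 0 h, fun h => ha p.1 0 p.2 h⟩
  have hxcard : (Finset.univ.filter (fun p : Fin n × Fin (n+1) => σx p.1 p.2 = true)).card
      = S.card * (n+1) := by
    rw [hx, Finset.card_product]; simp
  have hycard : (Finset.univ.filter (fun i : Fin n => σy i = true)).card ≤ n := by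
    calc _ ≤ (Finset.univ : Finset (Fin n)).card := Finset.card_filter_le _ _
    _ = n := by simp
  have key : ∀ m, ∀ h : m < n, (σy ⟨m, h⟩ = true ↔
      Odd ((Finset.univ.filter (fun i : Fin n => (i:ℕ) ≤ m ∧ σx i 0 = true)).card)) := by
    intro m
    induction m with
    | zero =>
      intro h
      rw [hc ⟨0, h⟩]
      simp only [if_pos rfl]
      by_cases hp : σx ⟨0, h⟩ 0 = true
      · have : (Finset.univ.filter (fun i : Fin n => (i:ℕ) ≤ 0 ∧ σx i 0 = true))
            = {⟨0, h⟩} := by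
          ext i
          simp only [Finset.mem_filter, Finset.mem_univ, true_and, Finset.mem_singleton]
          constructor
          · rintro ⟨h1, _⟩; exact Fin.ext (by simp; omega)
          · rintro rfl; exact ⟨le_refl _, hp⟩
        rw [this, hp]
        simp
      · have : (Finset.univ.filter (fun i : Fin n => (i:ℕ) ≤ 0 ∧ σx i 0 = true)) = ∅ := by
          ext i
          simp only [Finset.mem_filter, Finset.mem_univ, true_and, Finset.notMem_empty,
            iff_false, not_and]
          intro h1
          have : i = ⟨0, h⟩ := Fin.ext (by simp; omega)
          rw [this]; exact fun hh => hp hh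
        have hp' : σx ⟨0, h⟩ 0 = false := by simpa using hp
        rw [this, hp']
        simp
    | succ m ih =>
      intro h
      have hm : m < n := Nat.lt_of_succ_lt h
      have hstep := hc ⟨m+1, h⟩
      simp only [Nat.succ_ne_zero, if_neg] at hstep
      have hidx : (⟨(m+1) - 1, _⟩ : Fin n) = ⟨m, hm⟩ := rfl
      by_cases hp : σx ⟨m+1, h⟩ 0 = true
      · have hset : (Finset.univ.filter (fun i : Fin n => (i:ℕ) ≤ m+1 ∧ σx i 0 = true))
            = insert ⟨m+1, h⟩ (Finset.univ.filter (fun i : Fin n => (i:ℕ) ≤ m ∧ σx i 0 = true)) := by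
          ext i
          simp only [Finset.mem_filter, Finset.mem_univ, true_and, Finset.mem_insert]
          constructor
          · rintro ⟨h1, h2⟩
            rcases Nat.lt_or_ge (i:ℕ) (m+1) with hlt | hge
            · exact Or.inr ⟨by omega, h2⟩
            · exact Or.inl (Fin.ext (by simp; omega))
          · rintro (rfl | ⟨h1, h2⟩)
            · exact ⟨le_refl _, hp⟩
            · exact ⟨by omega, h2⟩
        have hnotmem : (⟨m+1, h⟩ : Fin n) ∉
            (Finset.univ.filter (fun i : Fin n => (i:ℕ) ≤ m ∧ σx i 0 = true)) := by
          simp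
        rw [hset, Finset.card_insert_of_notMem hnotmem, hstep, hp]
        rw [Nat.odd_add_one, ← ih hm]
        simp
      · have hp' : σx ⟨m+1, h⟩ 0 = false := by simpa using hp
        have hset : (Finset.univ.filter (fun i : Fin n => (i:ℕ) ≤ m+1 ∧ σx i 0 = true))
            = (Finset.univ.filter (fun i : Fin n => (i:ℕ) ≤ m ∧ σx i 0 = true)) := by
          ext i
          simp only [Finset.mem_filter, Finset.mem_univ, true_and]
          constructor
          · rintro ⟨h1, h2⟩
            refine ⟨?_, h2⟩
            rcases Nat.lt_or_ge (i:ℕ) (m+1) with hlt | hge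
            · omega
            · exfalso; have : i = ⟨m+1, h⟩ := Fin.ext (by simp; omega); rw [this] at h2; exact hp h2
          · rintro ⟨h1, h2⟩; exact ⟨by omega, h2⟩
        rw [hset, hstep, hp']
        rw [← ih hm]
        simp
  have hfin : (Finset.univ.filter (fun i : Fin n => (i:ℕ) ≤ n - 1 ∧ σx i 0 = true)) = S := by
    ext i
    simp only [Finset.mem_filter, Finset.mem_univ, true_and, hSmem]
    have := i.isLt
    constructor
    · rintro ⟨_, h2⟩; exact h2
    · intro h2; exact ⟨by omega, h2⟩
  refine ⟨?_, ?_, ?_, ?_⟩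
  · intro a haS b hbS hadj
    exact hb a b hadj 0 0 ⟨(hSmem a).1 haS, (hSmem b).1 hbS⟩
  · unfold aWeight
    rw [hxcard]
    exact Nat.le_add_right _ _
  · unfold aWeight
    rw [hxcard]
    omega
  · rw [key (n-1) (Nat.sub_lt hn one_pos), hfin]
end

section
/- The maximum size of an independent set of G is odd if and only if there exists an admissible assignment σ with σ(y_n) = True whose weight is maximum among all admissible assignments. -/
namespace Stmt5Aux

open Finset

variable {n : ℕ}

def Indep (G : SimpleGraph (Fin n)) (s : Fin n → Bool) : Prop :=
  ∀ i₁ i₂ : Fin n, G.Adj i₁ i₂ → ¬(s i₁ = true ∧ s i₂ = true)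

def sx (s : Fin n → Bool) : Fin n → Fin (n+1) → Bool := fun i _ => s i

def sExt (n : ℕ) (s : Fin n → Bool) : ℕ → Bool :=
  fun m => if h : m < n then s ⟨m, h⟩ else false

def g (s : Fin n → Bool) (m : ℕ) : Bool :=
  decide (Odd ((Finset.range m).filter (fun j => sExt n s j = true)).card)

def sy (s : Fin n → Bool) : Fin n → Bool := fun i => g s ((i : ℕ) + 1)

lemma g_zero (s : Fin n → Bool) : g s 0 = false := by
  simp [g]

lemma g_succ (s : Fin n → Bool) (m : ℕ) :
    g s (m + 1) = xor (g s m) (sExt n s m) := by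
  unfold g
  rw [Finset.range_add_one, Finset.filter_insert]
  by_cases h : sExt n s m = true
  · rw [if_pos h, Finset.card_insert_of_notMem (by simp)]
    rcases Nat.even_or_odd (((Finset.range m).filter (fun j => sExt n s j = true)).card) with he | ho
    · simp [h, Nat.even_add_one, Nat.not_odd_iff_even, he, Nat.not_even_iff_odd]
    · simp [h, ho, Nat.even_add_one, Nat.not_odd_iff_even, Nat.not_even_iff_odd]
  · rw [if_neg h]
    simp at h
    simp [h]

lemma sy_rec (s : Fin n → Bool) (i : Fin n) :
    sy s i = if (i : ℕ) = 0 then s i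
      else xor (sy s ⟨(i : ℕ) - 1, lt_of_le_of_lt (Nat.sub_le _ _) i.isLt⟩) (s i) := by
  have hx : sExt n s (i : ℕ) = s i := by
    simp [sExt, i.isLt]
  rcases Nat.eq_zero_or_pos (i : ℕ) with h0 | hpos
  · rw [if_pos h0]
    show g s ((i:ℕ)+1) = s i
    rw [h0, g_succ, g_zero]
    rw [← h0, hx]
    simp
  · rw [if_neg (Nat.pos_iff_ne_zero.1 hpos)]
    show g s ((i:ℕ)+1) = xor (g s (((i:ℕ) - 1) + 1)) (s i)
    rw [g_succ, hx]
    congr 2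
    omega

lemma admissible_sx_sy (G : SimpleGraph (Fin n)) (s : Fin n → Bool) (h : Indep G s) :
    Admissible G (sx s) (sy s) := by
  refine ⟨fun i j k hj => hj, fun i₁ i₂ hadj j k => h i₁ i₂ hadj, fun i => sy_rec s i⟩

lemma y_unique (σx : Fin n → Fin (n+1) → Bool) (σy : Fin n → Bool)
    (hc : ∀ i : Fin n, σy i =
      if (i : ℕ) = 0 then σx i 0
      else xor (σy ⟨(i : ℕ) - 1, lt_of_le_of_lt (Nat.sub_le _ _) i.isLt⟩) (σx i 0)) :
    σy = sy (fun i => σx i 0) := by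
  set s : Fin n → Bool := fun i => σx i 0 with hs
  have key : ∀ m : ℕ, ∀ h : m < n, σy ⟨m, h⟩ = sy s ⟨m, h⟩ := by
    intro m
    induction m using Nat.strong_induction_on with
    | _ m ih =>
      intro h
      have h1 := hc ⟨m, h⟩
      have h2 := sy_rec s ⟨m, h⟩
      rcases Nat.eq_zero_or_pos m with h0 | hpos
      · subst h0; simpa [h2] using h1
      · rw [if_neg (by simpa using Nat.pos_iff_ne_zero.1 hpos)] at h1 h2
        rw [h1, h2, ih (m-1) (by omega) _]
  funext i
  have := key (i : ℕ) i.isLt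
  simpa using this

lemma card_bridge (s : Fin n → Bool) :
    ((Finset.range n).filter (fun j => sExt n s j = true)).card
      = (Finset.univ.filter (fun i : Fin n => s i = true)).card := by
  rw [Finset.card_filter, Finset.card_filter,
    ← Fin.sum_univ_eq_sum_range (fun m => if sExt n s m = true then 1 else 0)]
  apply Finset.sum_congr rfl
  intro i _
  simp [sExt, i.isLt]

lemma sy_last (hn : 0 < n) (s : Fin n → Bool) :
    sy s ⟨n - 1, Nat.sub_lt hn one_pos⟩
      = decide (Odd (Finset.univ.filter (fun i : Fin n => s i = true)).card) := by
  show g s (n - 1 + 1) = _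
  rw [Nat.sub_add_cancel hn]
  unfold g
  rw [card_bridge]

lemma weight_eq (σx : Fin n → Fin (n+1) → Bool) (σy : Fin n → Bool) (s : Fin n → Bool)
    (hx : ∀ i j, σx i j = s i) :
    aWeight σx σy = (n+1) * (Finset.univ.filter (fun i : Fin n => s i = true)).card
      + (Finset.univ.filter (fun i : Fin n => σy i = true)).card := by
  unfold aWeight
  congr 1
  have : (Finset.univ.filter (fun p : Fin n × Fin (n+1) => σx p.1 p.2 = true))
      = (Finset.univ.filter (fun i : Fin n => s i = true)) ×ˢ Finset.univ := by
    ext p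
    simp [Finset.mem_product, hx p.1 p.2]
  rw [this, Finset.card_product, Finset.card_univ, Fintype.card_fin, Nat.mul_comm]

lemma ycount_le (σy : Fin n → Bool) :
    (Finset.univ.filter (fun i : Fin n => σy i = true)).card ≤ n := by
  calc (Finset.univ.filter (fun i : Fin n => σy i = true)).card
      ≤ (Finset.univ : Finset (Fin n)).card := Finset.card_filter_le _ _
    _ = n := by simp

lemma key_ineq {a a' b b' : ℕ} (hb : b ≤ n) (h : a < a') :
    (n+1)*a + b < (n+1)*a' + b' := by
  have h1 : (n+1)*(a+1) ≤ (n+1)*a' := Nat.mul_le_mul_left _ h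
  have h2 : (n+1)*(a+1) = (n+1)*a + (n+1) := by ring
  linarith

lemma copies_eq (σx : Fin n → Fin (n+1) → Bool)
    (ha : ∀ i : Fin n, ∀ j k : Fin (n+1), σx i j = true → σx i k = true)
    (i : Fin n) (j : Fin (n+1)) : σx i j = σx i 0 := by
  by_cases h : σx i j = true
  · rw [h, ha i j 0 h]
  · rcases Bool.eq_false_or_eq_true (σx i 0) with h0 | h0
    · exact absurd (ha i 0 j h0) h
    · simp at h; rw [h, h0]

end Stmt5Aux

open Stmt5Aux

/-- The maximum size of an independent set of `G` is odd iff there is an admissible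
assignment setting `y_n` to true whose weight is maximum among all admissible
assignments. -/
theorem stmt5 {n : ℕ} (hn : 0 < n) (G : SimpleGraph (Fin n)) :
    (∃ S : Finset (Fin n), (∀ a ∈ S, ∀ b ∈ S, ¬ G.Adj a b) ∧ Odd S.card ∧
      ∀ S' : Finset (Fin n), (∀ a ∈ S', ∀ b ∈ S', ¬ G.Adj a b) → S'.card ≤ S.card) ↔
    (∃ σx : Fin n → Fin (n+1) → Bool, ∃ σy : Fin n → Bool,
      Admissible G σx σy ∧ σy ⟨n - 1, Nat.sub_lt hn one_pos⟩ = true ∧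
      ∀ σx' σy', Admissible G σx' σy' → aWeight σx' σy' ≤ aWeight σx σy) := by
  classical
  constructor
  · rintro ⟨S, hSind, hSodd, hSmax⟩
    set k := S.card with hk
    set T : Finset (Fin n → Bool) :=
      Finset.univ.filter (fun s : Fin n → Bool =>
        Indep G s ∧ (Finset.univ.filter (fun i => s i = true)).card = k) with hT
    have hTne : T.Nonempty := by
      refine ⟨fun i => decide (i ∈ S), ?_⟩
      have hfe : (Finset.univ.filter (fun i : Fin n => decide (i ∈ S) = true)) = S := by
        ext i; simp
      rw [hT, Finset.mem_filter]
      refine ⟨Finset.mem_univ _, ?_, by rw [hfe]⟩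
      intro i₁ i₂ hadj ⟨h1, h2⟩
      simp at h1 h2
      exact hSind i₁ h1 i₂ h2 hadj
    obtain ⟨s, hsT, hsmax⟩ :=
      Finset.exists_max_image T (fun s => aWeight (sx s) (sy s)) hTne
    rw [hT, Finset.mem_filter] at hsT
    obtain ⟨-, hsInd, hscard⟩ := hsT
    refine ⟨sx s, sy s, admissible_sx_sy G s hsInd, ?_, ?_⟩
    · rw [sy_last hn s, hscard]
      simpa using hSodd
    · intro σx' σy' hA'
      obtain ⟨ha', hb', hc'⟩ := hA'
      set s' : Fin n → Bool := fun i => σx' i 0 with hs'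
      have hcop : ∀ i j, σx' i j = s' i := fun i j => copies_eq σx' ha' i j
      have hy' : σy' = sy s' := y_unique σx' σy' hc'
      have hInd' : Indep G s' := by
        intro i₁ i₂ hadj ⟨h1, h2⟩
        exact hb' i₁ i₂ hadj 0 0 ⟨h1, h2⟩
      set a := (Finset.univ.filter (fun i : Fin n => s' i = true)).card with haa
      have hale : a ≤ k := by
        apply hSmax
        intro i₁ h1 i₂ h2 hadj
        simp only [Finset.mem_filter] at h1 h2
        exact hInd' i₁ i₂ hadj ⟨h1.2, h2.2⟩
      have hw' : aWeight σx' σy' = aWeight (sx s') (sy s') := by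
        rw [weight_eq σx' σy' s' hcop, weight_eq (sx s') (sy s') s' (fun i j => rfl), hy']
      rcases Nat.lt_or_ge a k with hlt | hge
      · rw [weight_eq σx' σy' s' hcop, weight_eq (sx s) (sy s) s (fun i j => rfl), hscard]
        exact le_of_lt (key_ineq (ycount_le σy') hlt)
      · have hak : a = k := le_antisymm hale hge
        rw [hw']
        apply hsmax
        rw [hT, Finset.mem_filter]
        exact ⟨Finset.mem_univ _, hInd', hak⟩
  · rintro ⟨σx, σy, hA, hy, hmax⟩
    obtain ⟨ha, hb, hc⟩ := hA
    set s : Fin n → Bool := fun i => σx i 0 with hs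
    have hcop : ∀ i j, σx i j = s i := fun i j => copies_eq σx ha i j
    have hyeq : σy = sy s := y_unique σx σy hc
    set S := Finset.univ.filter (fun i : Fin n => s i = true) with hS
    have hSind : ∀ a ∈ S, ∀ b ∈ S, ¬ G.Adj a b := by
      intro i₁ h1 i₂ h2 hadj
      simp only [hS, Finset.mem_filter] at h1 h2
      exact hb i₁ i₂ hadj 0 0 ⟨h1.2, h2.2⟩
    refine ⟨S, hSind, ?_, ?_⟩
    · have := hy
      rw [hyeq, sy_last hn s] at this
      simpa using this
    · intro S' hS'
      set s' : Fin n → Bool := fun i => decide (i ∈ S') with hs'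
      have hfe : (Finset.univ.filter (fun i : Fin n => s' i = true)) = S' := by
        ext i; simp [hs']
      have hInd' : Indep G s' := by
        intro i₁ i₂ hadj ⟨h1, h2⟩
        simp [hs'] at h1 h2
        exact hS' i₁ h1 i₂ h2 hadj
      have hle := hmax (sx s') (sy s') (admissible_sx_sy G s' hInd')
      rw [weight_eq (sx s') (sy s') s' (fun i j => rfl),
        weight_eq σx σy s hcop, hfe] at hle
      by_contra hcon
      push_neg at hcon
      exact absurd hle (not_le.2 (key_ineq (ycount_le σy) hcon))
end

section
/- Let V be a finite set, A a relation on V, s a positive integer, and D, E, F pairwise disjoint subsets of V, each of size at least s, such that (d,e) ∈ A, (e,f) ∈ A, and (f,d) ∈ A for all d ∈ D, e ∈ E, f ∈ F. Then for every linear order ≺ on V, the number of pairs (u,v) ∈ (D×E) ∪ (E×F) ∪ (F×D) with v ≺ u is at least s². -/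
/-- In any linear order, at least `s²` of the pairs of `(D×E) ∪ (E×F) ∪ (F×D)`
(which are all arcs of `A`) are reversed. -/
theorem stmt7 {V : Type*} [Fintype V] (A : V → V → Prop) (s : ℕ) (hs : 0 < s)
    (D E F : Set V)
    (hDE : Disjoint D E) (hEF : Disjoint E F) (hDF : Disjoint D F)
    (hD : s ≤ D.ncard) (hE : s ≤ E.ncard) (hF : s ≤ F.ncard)
    (hADE : ∀ d ∈ D, ∀ e ∈ E, A d e) (hAEF : ∀ e ∈ E, ∀ f ∈ F, A e f)
    (hAFD : ∀ f ∈ F, ∀ d ∈ D, A f d)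
    (r : V → V → Prop) (hr : IsStrictTotalOrder V r) :
    s ^ 2 ≤ {p : V × V |
        ((p.1 ∈ D ∧ p.2 ∈ E) ∨ (p.1 ∈ E ∧ p.2 ∈ F) ∨ (p.1 ∈ F ∧ p.2 ∈ D)) ∧
        r p.2 p.1}.ncard := by
  classical
  have htri : ∀ x y : V, x ≠ y → ¬ r y x → r x y := by
    intro x y hxy h
    by_contra h1
    exact hxy (hr.trichotomous x y h1 h)
  have hDc : s ≤ D.toFinset.card := by rwa [Set.ncard_eq_toFinset_card'] at hD
  have hEc : s ≤ E.toFinset.card := by rwa [Set.ncard_eq_toFinset_card'] at hE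
  have hFc : s ≤ F.toFinset.card := by rwa [Set.ncard_eq_toFinset_card'] at hF
  obtain ⟨D₀, hD₀sub, hD₀⟩ := Finset.exists_subset_card_eq hDc
  obtain ⟨E₀, hE₀sub, hE₀⟩ := Finset.exists_subset_card_eq hEc
  obtain ⟨F₀, hF₀sub, hF₀⟩ := Finset.exists_subset_card_eq hFc
  have hD₀D : ∀ x ∈ D₀, x ∈ D := fun x hx => Set.mem_toFinset.mp (hD₀sub hx)
  have hE₀E : ∀ x ∈ E₀, x ∈ E := fun x hx => Set.mem_toFinset.mp (hE₀sub hx)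
  have hF₀F : ∀ x ∈ F₀, x ∈ F := fun x hx => Set.mem_toFinset.mp (hF₀sub hx)
  set S : Set (V × V) := {p : V × V |
      ((p.1 ∈ D ∧ p.2 ∈ E) ∨ (p.1 ∈ E ∧ p.2 ∈ F) ∨ (p.1 ∈ F ∧ p.2 ∈ D)) ∧
      r p.2 p.1} with hS
  set g : V × V × V → V × V := fun t =>
    if r t.2.1 t.1 then (t.1, t.2.1)
    else if r t.2.2 t.2.1 then (t.2.1, t.2.2) else (t.2.2, t.1) with hg
  set T : Finset (V × V × V) := D₀ ×ˢ E₀ ×ˢ F₀ with hT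
  have hmemT : ∀ t ∈ T, t.1 ∈ D₀ ∧ t.2.1 ∈ E₀ ∧ t.2.2 ∈ F₀ := by
    intro t ht
    simp only [hT, Finset.mem_product] at ht
    exact ⟨ht.1, ht.2.1, ht.2.2⟩
  have hTcard : T.card = s ^ 3 := by
    simp only [hT, Finset.card_product, hD₀, hE₀, hF₀]; ring
  -- the image lies in S
  have himg : ∀ t ∈ T, g t ∈ S := by
    intro t ht
    obtain ⟨h1, h2, h3⟩ := hmemT t ht
    have hd := hD₀D _ h1
    have he := hE₀E _ h2
    have hf := hF₀F _ h3
    simp only [hg]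
    split_ifs with c1 c2
    · exact ⟨Or.inl ⟨hd, he⟩, c1⟩
    · exact ⟨Or.inr (Or.inl ⟨he, hf⟩), c2⟩
    · refine ⟨Or.inr (Or.inr ⟨hf, hd⟩), ?_⟩
      have hde : t.1 ≠ t.2.1 := fun h => (Set.disjoint_left.mp hDE hd) (h ▸ he)
      have hef : t.2.1 ≠ t.2.2 := fun h => (Set.disjoint_left.mp hEF he) (h ▸ hf)
      exact hr.trans _ _ _ (htri _ _ hde c1) (htri _ _ hef c2)
  -- fiber bound
  have hfiber : ∀ p ∈ T.image g, (T.filter fun t => g t = p).card ≤ s := by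
    intro p hp
    obtain ⟨t, ht, hgt⟩ := Finset.mem_image.mp hp
    obtain ⟨h1, h2, h3⟩ := hmemT t ht
    have key : (p.1 ∈ D) ∨ (p.1 ∈ E) ∨ (p.1 ∈ F) := by
      simp only [hg] at hgt
      split_ifs at hgt <;> rw [← hgt]
      · exact Or.inl (hD₀D _ h1)
      · exact Or.inr (Or.inl (hE₀E _ h2))
      · exact Or.inr (Or.inr (hF₀F _ h3))
    rcases key with hp1 | hp1 | hp1
    · calc (T.filter fun t => g t = p).card
          ≤ ({p.1} ×ˢ {p.2} ×ˢ F₀ : Finset (V × V × V)).card := by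
            apply Finset.card_le_card
            intro u hu
            obtain ⟨hu1, hu2⟩ := Finset.mem_filter.mp hu
            obtain ⟨k1, k2, k3⟩ := hmemT u hu1
            simp only [hg] at hu2
            split_ifs at hu2
            · simp only [Finset.mem_product, Finset.mem_singleton, ← hu2]
              exact ⟨trivial, trivial, k3⟩
            · have hpE : p.1 ∈ E := by rw [← hu2]; exact hE₀E _ k2
              exact (Set.disjoint_left.mp hDE hp1 hpE).elim
            · have hpF : p.1 ∈ F := by rw [← hu2]; exact hF₀F _ k3
              exact (Set.disjoint_left.mp hDF hp1 hpF).elim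
        _ ≤ s := by simp [Finset.card_product, hF₀]
    · calc (T.filter fun t => g t = p).card
          ≤ (D₀ ×ˢ {p.1} ×ˢ {p.2} : Finset (V × V × V)).card := by
            apply Finset.card_le_card
            intro u hu
            obtain ⟨hu1, hu2⟩ := Finset.mem_filter.mp hu
            obtain ⟨k1, k2, k3⟩ := hmemT u hu1
            simp only [hg] at hu2
            split_ifs at hu2
            · have hpD : p.1 ∈ D := by rw [← hu2]; exact hD₀D _ k1
              exact (Set.disjoint_left.mp hDE hpD hp1).elim
            · simp only [Finset.mem_product, Finset.mem_singleton, ← hu2]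
              exact ⟨k1, trivial, trivial⟩
            · have hpF : p.1 ∈ F := by rw [← hu2]; exact hF₀F _ k3
              exact (Set.disjoint_left.mp hEF hp1 hpF).elim
        _ ≤ s := by simp [Finset.card_product, hD₀]
    · calc (T.filter fun t => g t = p).card
          ≤ ({p.2} ×ˢ E₀ ×ˢ {p.1} : Finset (V × V × V)).card := by
            apply Finset.card_le_card
            intro u hu
            obtain ⟨hu1, hu2⟩ := Finset.mem_filter.mp hu
            obtain ⟨k1, k2, k3⟩ := hmemT u hu1
            simp only [hg] at hu2
            split_ifs at hu2
            · have hpD : p.1 ∈ D := by rw [← hu2]; exact hD₀D _ k1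
              exact (Set.disjoint_left.mp hDF hpD hp1).elim
            · have hpE : p.1 ∈ E := by rw [← hu2]; exact hE₀E _ k2
              exact (Set.disjoint_left.mp hEF hpE hp1).elim
            · simp only [Finset.mem_product, Finset.mem_singleton, ← hu2]
              exact ⟨trivial, k2, trivial⟩
        _ ≤ s := by simp [Finset.card_product, hE₀]
  have hcount := Finset.card_le_mul_card_image (f := g) T s hfiber
  rw [hTcard] at hcount
  have himgcard : s ^ 2 ≤ (T.image g).card := by
    have : s * s ^ 2 ≤ s * (T.image g).card := by
      calc s * s ^ 2 = s ^ 3 := by ring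
        _ ≤ s * (T.image g).card := hcount
    exact Nat.le_of_mul_le_mul_left this hs
  have hsub : T.image g ⊆ S.toFinset := by
    intro p hp
    obtain ⟨t, ht, hgt⟩ := Finset.mem_image.mp hp
    exact Set.mem_toFinset.mpr (hgt ▸ himg t ht)
  calc s ^ 2 ≤ (T.image g).card := himgcard
    _ ≤ S.toFinset.card := Finset.card_le_card hsub
    _ = S.ncard := (Set.ncard_eq_toFinset_card' S).symm
end

section
/- Let V be a finite set and X ⊆ V×V an irreflexive set of ordered pairs. Suppose there is a set C ⊆ V of 'centers' such that: every pair in X has exactly one endpoint in C; every vertex of V∖C occurs as an endpoint of at most one pair of X; and for each c ∈ C, either all pairs of X incident to c have c as their first coordinate, or all have c as their second coordinate. Then there exist two strict linear orders <₁ and <₂ on V such that for all distinct a, b ∈ V: (a,b) ∈ X if and only if a <₁ b and a <₂ b. -/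
open Classical

noncomputable section

variable {V : Type*} [Fintype V]

/-- The representative (component center) of a vertex. -/
def rep8 (X : Set (V × V)) (C : Set V) (v : V) : V :=
  if v ∈ C then v
  else if h : ∃ p ∈ X, p.1 = v ∨ p.2 = v then
    (if (choose h).1 = v then (choose h).2 else (choose h).1)
  else v

/-- The orientation of a center: `True` means it is a source. -/
def orient8 (X : Set (V × V)) (c : V) : Prop :=
  ∀ p ∈ X, (p.1 = c ∨ p.2 = c) → p.1 = c

lemma rep8_center (X : Set (V × V)) (C : Set V) {v : V} (hv : v ∈ C) :
    rep8 X C v = v := by simp [rep8, hv]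

lemma rep8_pair (X : Set (V × V)) (C : Set V)
    (hone : ∀ p ∈ X, (p.1 ∈ C ∧ p.2 ∉ C) ∨ (p.1 ∉ C ∧ p.2 ∈ C))
    (hdeg : ∀ v : V, v ∉ C → ∀ p ∈ X, ∀ q ∈ X,
      (p.1 = v ∨ p.2 = v) → (q.1 = v ∨ q.2 = v) → p = q)
    {v : V} (hv : v ∉ C) {p : V × V} (hp : p ∈ X) (hpv : p.1 = v ∨ p.2 = v) :
    rep8 X C v ∈ C ∧
      ((p.1 = rep8 X C v ∧ p.2 = v) ∨ (p.1 = v ∧ p.2 = rep8 X C v)) := by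
  have hex : ∃ q ∈ X, q.1 = v ∨ q.2 = v := ⟨p, hp, hpv⟩
  have hrep : rep8 X C v =
      if (choose hex).1 = v then (choose hex).2 else (choose hex).1 := by
    rw [rep8, if_neg hv, dif_pos hex]
  obtain ⟨hqX, hqv⟩ := choose_spec hex
  have hpq : p = choose hex := hdeg v hv p hp _ hqX hpv hqv
  by_cases h1 : (choose hex).1 = v
  · rw [if_pos h1] at hrep
    have h2 : (choose hex).2 ∈ C := by
      rcases hone _ hqX with ⟨hc, _⟩ | ⟨_, hc⟩
      · exact absurd (h1 ▸ hc) hv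
      · exact hc
    exact ⟨hrep ▸ h2, Or.inr ⟨hpq ▸ h1, hpq ▸ hrep.symm⟩⟩
  · rw [if_neg h1] at hrep
    have h2 : (choose hex).2 = v := hqv.resolve_left h1
    have h3 : (choose hex).1 ∈ C := by
      rcases hone _ hqX with ⟨hc, _⟩ | ⟨_, hc⟩
      · exact hc
      · exact absurd (h2 ▸ hc) hv
    exact ⟨hrep ▸ h3, Or.inl ⟨hpq ▸ hrep.symm, hpq ▸ h2⟩⟩

lemma rep8_ne (X : Set (V × V)) (C : Set V) {v : V} (h : rep8 X C v ≠ v) :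
    v ∉ C ∧ ∃ p ∈ X, p.1 = v ∨ p.2 = v := by
  by_cases hv : v ∈ C
  · exact absurd (rep8_center X C hv) h
  refine ⟨hv, ?_⟩
  by_contra hex
  exact h (by rw [rep8, if_neg hv, dif_neg hex])

lemma isStrictTotalOrder_of_injective {V L : Type*} [LinearOrder L] (h : V → L)
    (hinj : Function.Injective h) :
    IsStrictTotalOrder V (fun a b => h a < h b) where
  trichotomous a b := by
    rcases lt_trichotomy (h a) (h b) with hx | hx | hx
    exacts [fun h1 _ => absurd hx h1, fun _ _ => hinj hx, fun _ h2 => absurd hx h2]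
  irrefl a := lt_irrefl (h a)
  trans a b c := lt_trans

end

/-- If the irreflexive pair set `X` is a union of stars centered at `C` (every pair has
exactly one endpoint in `C`, non-centers are in at most one pair, and each center is
consistently a source or consistently a target), then `X` is induced by two strict
linear orders: `(a,b) ∈ X` iff `a` precedes `b` in both. -/
theorem stmt8 {V : Type*} [Fintype V] (X : Set (V × V))
    (hirr : ∀ a : V, (a, a) ∉ X) (C : Set V)
    (hone : ∀ p ∈ X, (p.1 ∈ C ∧ p.2 ∉ C) ∨ (p.1 ∉ C ∧ p.2 ∈ C))
    (hdeg : ∀ v : V, v ∉ C → ∀ p ∈ X, ∀ q ∈ X,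
      (p.1 = v ∨ p.2 = v) → (q.1 = v ∨ q.2 = v) → p = q)
    (hstar : ∀ c ∈ C, (∀ p ∈ X, (p.1 = c ∨ p.2 = c) → p.1 = c) ∨
                      (∀ p ∈ X, (p.1 = c ∨ p.2 = c) → p.2 = c)) :
    ∃ r₁ r₂ : V → V → Prop, IsStrictTotalOrder V r₁ ∧ IsStrictTotalOrder V r₂ ∧
      ∀ a b : V, a ≠ b → ((a, b) ∈ X ↔ (r₁ a b ∧ r₂ a b)) := by
  classical
  set n := Fintype.card V with hn
  obtain e : V ≃ Fin n := Fintype.equivFin V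
  set R : V → V := rep8 X C with hR
  set O : V → Prop := orient8 X with hO
  have hOdef : ∀ c, O c ↔ ∀ p ∈ X, (p.1 = c ∨ p.2 = c) → p.1 = c := fun c => Iff.rfl
  let ι : V → ℕ := fun v => (e v : ℕ)
  have hι : ∀ v, ι v < n := fun v => (e v).isLt
  have hιinj : ∀ {a b : V}, ι a = ι b → a = b := fun {a b} h =>
    e.injective (Fin.ext h)
  let pf : V → ℕ := fun v =>
    if R v = v then (if O v then 0 else n + 1)
    else (if O (R v) then ι v + 1 else ι v)
  let pg : V → ℕ := fun v =>
    if R v = v then (if O v then 0 else n + 1)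
    else (if O (R v) then n - ι v else n - 1 - ι v)
  let f : V → ℕ ×ₗ ℕ := fun v => toLex (ι (R v), pf v)
  let g : V → ℕ ×ₗ ℕ := fun v => toLex (n - ι (R v), pg v)
  -- Structure of leaves
  have hleaf : ∀ v : V, R v ≠ v → R v ∈ C ∧ v ∉ C ∧
      (O (R v) → (R v, v) ∈ X) ∧ (¬ O (R v) → (v, R v) ∈ X) := by
    intro v hv
    obtain ⟨hvC, p, hp, hpv⟩ := rep8_ne X C hv
    obtain ⟨hRC, hcase⟩ := rep8_pair X C hone hdeg hvC hp hpv
    refine ⟨hRC, hvC, ?_, ?_⟩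
    · intro hOv
      rcases hcase with ⟨h1, h2⟩ | ⟨h1, h2⟩
      · have hpe : p = (R v, v) := Prod.ext h1 h2
        exact hpe ▸ hp
      · exfalso
        have h3 : p.1 = R v := hOv p hp (Or.inr h2)
        exact hv (h1.symm.trans h3).symm
    · intro hOv
      have hsec : ∀ q ∈ X, (q.1 = R v ∨ q.2 = R v) → q.2 = R v :=
        (hstar (R v) hRC).resolve_left hOv
      rcases hcase with ⟨h1, h2⟩ | ⟨h1, h2⟩
      · exfalso
        have h3 : p.2 = R v := hsec p hp (Or.inl h1)
        exact hv (h2.symm.trans h3).symm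
      · have hpe : p = (v, R v) := Prod.ext h1 h2
        exact hpe ▸ hp
  have pf_def : ∀ v, pf v = if R v = v then (if O v then 0 else n + 1)
      else (if O (R v) then ι v + 1 else ι v) := fun _ => rfl
  have pg_def : ∀ v, pg v = if R v = v then (if O v then 0 else n + 1)
      else (if O (R v) then n - ι v else n - 1 - ι v) := fun _ => rfl
  have flt : ∀ a b : V, f a < f b ↔
      (ι (R a) < ι (R b) ∨ (ι (R a) = ι (R b) ∧ pf a < pf b)) := fun a b =>
    Prod.Lex.lt_iff
  have glt : ∀ a b : V, g a < g b ↔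
      (n - ι (R a) < n - ι (R b) ∨ (n - ι (R a) = n - ι (R b) ∧ pg a < pg b)) := fun a b =>
    Prod.Lex.lt_iff
  -- injectivity of f
  have hfinj : Function.Injective f := by
    intro a b hab
    have h1 : (ι (R a), pf a) = (ι (R b), pf b) := toLex.injective hab
    rw [Prod.mk.injEq] at h1
    have hRab : R a = R b := hιinj h1.1
    have h2 := h1.2
    rw [pf_def, pf_def] at h2
    by_cases ha : R a = a <;> by_cases hb : R b = b
    · exact (ha.symm.trans hRab).trans hb
    · rw [if_pos ha, if_neg hb, ← hRab, ha] at h2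
      have := hι b
      by_cases hoa : O a
      · rw [if_pos hoa, if_pos hoa] at h2; omega
      · rw [if_neg hoa, if_neg hoa] at h2; omega
    · rw [if_neg ha, if_pos hb, hRab, hb] at h2
      have := hι a
      by_cases hob : O b
      · rw [if_pos hob, if_pos hob] at h2; omega
      · rw [if_neg hob, if_neg hob] at h2; omega
    · rw [if_neg ha, if_neg hb, hRab] at h2
      by_cases hoc : O (R b)
      · rw [if_pos hoc, if_pos hoc] at h2
        exact hιinj (by omega)
      · rw [if_neg hoc, if_neg hoc] at h2
        exact hιinj h2
  -- injectivity of g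
  have hginj : Function.Injective g := by
    intro a b hab
    have h1 : (n - ι (R a), pg a) = (n - ι (R b), pg b) := toLex.injective hab
    rw [Prod.mk.injEq] at h1
    have hRab : R a = R b := hιinj (by have := hι (R a); have := hι (R b); omega)
    have h2 := h1.2
    rw [pg_def, pg_def] at h2
    by_cases ha : R a = a <;> by_cases hb : R b = b
    · exact (ha.symm.trans hRab).trans hb
    · rw [if_pos ha, if_neg hb, ← hRab, ha] at h2
      have := hι b
      by_cases hoa : O a
      · rw [if_pos hoa, if_pos hoa] at h2; omega
      · rw [if_neg hoa, if_neg hoa] at h2; omega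
    · rw [if_neg ha, if_pos hb, hRab, hb] at h2
      have := hι a
      by_cases hob : O b
      · rw [if_pos hob, if_pos hob] at h2; omega
      · rw [if_neg hob, if_neg hob] at h2; omega
    · rw [if_neg ha, if_neg hb, hRab] at h2
      have := hι a; have := hι b
      by_cases hoc : O (R b)
      · rw [if_pos hoc, if_pos hoc] at h2
        exact hιinj (by omega)
      · rw [if_neg hoc, if_neg hoc] at h2
        exact hιinj (by omega)
  -- forward direction
  have hfwd : ∀ a b : V, a ≠ b → (a, b) ∈ X → f a < f b ∧ g a < g b := by
    intro a b hne hab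
    rcases hone (a, b) hab with ⟨haC, hbC⟩ | ⟨haC, hbC⟩
    · -- a is a source center
      have hOa : O a := by
        rcases hstar a haC with h | h
        · exact h
        · exact absurd (h (a, b) hab (Or.inl rfl)) hne.symm
      have hRa : R a = a := rep8_center X C haC
      have hRb : R b = a := by
        obtain ⟨_, hc⟩ := rep8_pair X C hone hdeg hbC hab (Or.inr rfl)
        rcases hc with ⟨h1, _⟩ | ⟨h1, _⟩
        · exact h1.symm
        · exact absurd h1 hne
      have hRbne : R b ≠ b := fun h => hne (hRb.symm.trans h)
      have hpfa : pf a = 0 := by rw [pf_def, if_pos hRa, if_pos hOa]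
      have hpfb : pf b = ι b + 1 := by
        rw [pf_def, if_neg hRbne, hRb, if_pos hOa]
      have hpga : pg a = 0 := by rw [pg_def, if_pos hRa, if_pos hOa]
      have hpgb : pg b = n - ι b := by
        rw [pg_def, if_neg hRbne, hRb, if_pos hOa]
      have hιb := hι b
      constructor
      · rw [flt]; right; rw [hRa, hRb]; omega
      · rw [glt]; right; rw [hRa, hRb]; omega
    · -- b is a target center
      have hOb : ¬ O b := fun h => hne (h (a, b) hab (Or.inr rfl))
      have hRb : R b = b := rep8_center X C hbC
      have hRa : R a = b := by
        obtain ⟨_, hc⟩ := rep8_pair X C hone hdeg haC hab (Or.inl rfl)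
        rcases hc with ⟨_, h2⟩ | ⟨_, h2⟩
        · exact absurd h2.symm hne
        · exact h2.symm
      have hRane : R a ≠ a := fun h => hne (hRa.symm.trans h).symm
      have hpfb : pf b = n + 1 := by rw [pf_def, if_pos hRb, if_neg hOb]
      have hpfa : pf a = ι a := by
        rw [pf_def, if_neg hRane, hRa, if_neg hOb]
      have hpgb : pg b = n + 1 := by rw [pg_def, if_pos hRb, if_neg hOb]
      have hpga : pg a = n - 1 - ι a := by
        rw [pg_def, if_neg hRane, hRa, if_neg hOb]
      have hιa := hι a
      constructor
      · rw [flt]; right; rw [hRa, hRb]; omega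
      · rw [glt]; right; rw [hRa, hRb]; omega
  -- backward direction
  have hbwd : ∀ a b : V, a ≠ b → f a < f b → g a < g b → (a, b) ∈ X := by
    intro a b hne hf hg
    have hιa := hι (R a); have hιb := hι (R b)
    obtain ⟨heq, hpf, hpg⟩ : ι (R a) = ι (R b) ∧ pf a < pf b ∧ pg a < pg b := by
      rcases (flt a b).1 hf with h | ⟨h1, h2⟩ <;>
        rcases (glt a b).1 hg with h' | ⟨h1', h2'⟩ <;>
        first
          | omega
          | exact ⟨h1, h2, h2'⟩
    have hRab : R a = R b := hιinj heq
    rw [pf_def, pf_def] at hpf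
    rw [pg_def, pg_def] at hpg
    by_cases ha : R a = a <;> by_cases hb : R b = b
    · exact absurd ((ha.symm.trans hRab).trans hb) hne
    · -- a is the center of b's star
      obtain ⟨hRbC, hbC, hout, hin⟩ := hleaf b hb
      by_cases hoc : O (R b)
      · have : (R b, b) ∈ X := hout hoc
        rwa [hRab.symm.trans ha] at this
      · exfalso
        rw [if_pos ha, if_neg hb, if_neg hoc] at hpf
        rw [← hRab, ha] at hoc
        rw [if_neg hoc] at hpf
        have := hι b
        omega
    · -- b is the center of a's star
      obtain ⟨hRaC, haC, hout, hin⟩ := hleaf a ha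
      by_cases hoc : O (R a)
      · exfalso
        rw [if_neg ha, if_pos hb, if_pos hoc] at hpf
        rw [hRab, hb] at hoc
        rw [if_pos hoc] at hpf
        omega
      · have : (a, R a) ∈ X := hin hoc
        rwa [hRab.trans hb] at this
    · -- both leaves: impossible
      exfalso
      rw [if_neg ha, if_neg hb, hRab] at hpf
      rw [if_neg ha, if_neg hb, hRab] at hpg
      have h1 := hι a; have h2 := hι b
      by_cases hoc : O (R b)
      · rw [if_pos hoc, if_pos hoc] at hpf
        rw [if_pos hoc, if_pos hoc] at hpg
        omega
      · rw [if_neg hoc, if_neg hoc] at hpf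
        rw [if_neg hoc, if_neg hoc] at hpg
        omega
  exact ⟨fun a b => f a < f b, fun a b => g a < g b,
    isStrictTotalOrder_of_injective f hfinj,
    isStrictTotalOrder_of_injective g hginj,
    fun a b hne => ⟨fun h => hfwd a b hne h, fun h => hbwd a b hne h.1 h.2⟩⟩
end

section
/- There exists a linear order on the vertices of T_φ whose implied feedback arc set has size at most n·s₁² + (3n−1)m·s₁·s₂ + 3n·s₁ + m²·s₂² + 9m(n−1)·s₂. -/
/-! ### The tournament `T_φ` of the reduction

A CNF formula `φ` with variables `x_1, …, x_n` and clauses `c_1, …, c_m` in which no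
variable occurs twice in a clause is given by its occurrence function
`occ : Fin n → Fin m → Option Bool`, where `occ i j = some true` (resp. `some false`)
means `x_i` occurs positively (resp. negatively) in `c_j`, and `none` means `x_i`
does not occur in `c_j`. -/

/-- The names of the `6n + m` modules of the tournament `T_φ`. -/
inductive ModName (n m : ℕ) : Type where
  | A : Fin n → ModName n m
  | B : Fin n → ModName n m
  | C : Fin n → ModName n m
  | D : Fin n → ModName n m
  | E : Fin n → ModName n m
  | F : Fin n → ModName n m
  | T : Fin m → ModName n m
  deriving DecidableEq, Fintype

/-- The group (variable index) of a module, if it is a variable module. -/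
def grp? {n m : ℕ} : ModName n m → Option (Fin n)
  | .A i => some i
  | .B i => some i
  | .C i => some i
  | .D i => some i
  | .E i => some i
  | .F i => some i
  | .T _ => none

/-- The clause index of a module, if it is a clause module. -/
def clause? {n m : ℕ} : ModName n m → Option (Fin m)
  | .T j => some j
  | _ => none

/-- The rank of a module within its group: `A = 0, B = 1, C = 2, D = 3, E = 4, F = 5`. -/
def rk {n m : ℕ} : ModName n m → ℕ
  | .A _ => 0
  | .B _ => 1
  | .C _ => 2
  | .D _ => 3
  | .E _ => 4
  | .F _ => 5
  | .T _ => 6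

/-- The size of each module: `A_i, B_i, C_i, D_i, F_i` have size `s₁`; `E_i` has size
`s₁ + 2` for `i < n` and `s₁ + 3` for `i = n` (i.e. index `n - 1`); `T_j` has size `s₂`. -/
def msize (n m s₁ s₂ : ℕ) : ModName n m → ℕ
  | .A _ => s₁
  | .B _ => s₁
  | .C _ => s₁
  | .D _ => s₁
  | .E i => if (i : ℕ) = n - 1 then s₁ + 3 else s₁ + 2
  | .F _ => s₁
  | .T _ => s₂

/-- The vertex set of `T_φ`: a vertex is a module name together with an index inside
the module. -/
abbrev Vtx (n m s₁ s₂ : ℕ) : Type := Σ M : ModName n m, Fin (msize n m s₁ s₂ M)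

/-- Whether all arcs go from `T_j` to the variable module of rank `r` of a group `i`
with `occ i j = o`: if `x_i` does not occur in `c_j`, `T_j` beats `A_i ∪ B_i ∪ C_i`
(ranks 0,1,2); if positively, `T_j` beats `A_i ∪ B_i ∪ F_i` (ranks 0,1,5); if
negatively, `T_j` beats `A_i ∪ C_i ∪ D_i` (ranks 0,2,3). -/
def tBeats : Option Bool → ℕ → Prop
  | none, r => r = 0 ∨ r = 1 ∨ r = 2
  | some true, r => r = 0 ∨ r = 1 ∨ r = 5
  | some false, r => r = 0 ∨ r = 2 ∨ r = 3

/-- The direction of the arcs between two distinct modules of `T_φ`. -/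
def modArc {n m : ℕ} (occ : Fin n → Fin m → Option Bool) (M M' : ModName n m) : Prop :=
  (∃ i i' : Fin n, grp? M = some i ∧ grp? M' = some i' ∧
    (i < i' ∨ (i = i' ∧ ((rk M < rk M' ∧ ¬(rk M = 3 ∧ rk M' = 5)) ∨
      (rk M = 5 ∧ rk M' = 3))))) ∨
  (∃ j j' : Fin m, clause? M = some j ∧ clause? M' = some j' ∧ j < j') ∨
  (∃ j : Fin m, ∃ i : Fin n, clause? M = some j ∧ grp? M' = some i ∧
    tBeats (occ i j) (rk M')) ∨
  (∃ i : Fin n, ∃ j : Fin m, grp? M = some i ∧ clause? M' = some j ∧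
    ¬ tBeats (occ i j) (rk M))

/-- The arc relation of the tournament `T_φ`: inside a module, arcs follow the
transitive order of the indices; between distinct modules, arcs are given by `modArc`. -/
def arc {n m s₁ s₂ : ℕ} (occ : Fin n → Fin m → Option Bool) :
    Vtx n m s₁ s₂ → Vtx n m s₁ s₂ → Prop :=
  fun u v => (u.1 = v.1 ∧ (u.2 : ℕ) < (v.2 : ℕ)) ∨ (u.1 ≠ v.1 ∧ modArc occ u.1 v.1)

/-- The set of vertices of a module. -/
def mset {n m s₁ s₂ : ℕ} (M : ModName n m) : Set (Vtx n m s₁ s₂) := {v | v.1 = M}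

/-- The set of vertices of group `i`: `A_i ∪ B_i ∪ C_i ∪ D_i ∪ E_i ∪ F_i`. -/
def gset {n m s₁ s₂ : ℕ} (i : Fin n) : Set (Vtx n m s₁ s₂) := {v | grp? v.1 = some i}

/-- The sink of the transitive tournament induced by the module `F_n`. -/
def fnSink (n m s₁ s₂ : ℕ) (hn : 0 < n) (hs₁ : 0 < s₁) : Vtx n m s₁ s₂ :=
  ⟨.F ⟨n - 1, Nat.sub_lt hn one_pos⟩, ⟨s₁ - 1, Nat.sub_lt hs₁ one_pos⟩⟩

/-- The assignment `σ` satisfies clause `c_j`. -/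
def SatClause {n m : ℕ} (occ : Fin n → Fin m → Option Bool) (σ : Fin n → Bool)
    (j : Fin m) : Prop :=
  ∃ i : Fin n, (occ i j = some true ∧ σ i = true) ∨ (occ i j = some false ∧ σ i = false)

/-- The assignment `σ` satisfies `φ`. -/
def Sat {n m : ℕ} (occ : Fin n → Fin m → Option Bool) (σ : Fin n → Bool) : Prop :=
  ∀ j : Fin m, SatClause occ σ j

/-- The weight of a truth assignment: the number of variables set to `true`. -/
def wt {n : ℕ} (σ : Fin n → Bool) : ℕ := (Finset.univ.filter (fun i => σ i = true)).card

/-- Every element of `S` comes before every element of `S'` in the order `r`. -/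
def Before {V : Type*} (r : V → V → Prop) (S S' : Set V) : Prop := ∀ u ∈ S, ∀ v ∈ S', r u v

/-- A linear order on the vertices of `T_φ` is structured if every module is contiguous,
groups appear in increasing order, within each group `A_i ≺ B_i ≺ C_i` come before
`D_i ∪ E_i ∪ F_i`, and the last three modules appear in one of the cyclic orders
`D_i ≺ E_i ≺ F_i`, `E_i ≺ F_i ≺ D_i`, `F_i ≺ D_i ≺ E_i`. -/
def Structured {n m s₁ s₂ : ℕ} (r : Vtx n m s₁ s₂ → Vtx n m s₁ s₂ → Prop) : Prop :=
  (∀ M : ModName n m, Contig r (mset M)) ∧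
  (∀ i i' : Fin n, i < i' → Before r (gset i) (gset i')) ∧
  (∀ i : Fin n,
    Before r (mset (.A i)) (mset (.B i)) ∧
    Before r (mset (.B i)) (mset (.C i)) ∧
    Before r (mset (.A i) ∪ mset (.B i) ∪ mset (.C i))
      (mset (.D i) ∪ mset (.E i) ∪ mset (.F i))) ∧
  (∀ i : Fin n,
    (Before r (mset (.D i)) (mset (.E i)) ∧ Before r (mset (.E i)) (mset (.F i))) ∨
    (Before r (mset (.E i)) (mset (.F i)) ∧ Before r (mset (.F i)) (mset (.D i))) ∨
    (Before r (mset (.F i)) (mset (.D i)) ∧ Before r (mset (.D i)) (mset (.E i))))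

/-- `σ` is the assignment extracted from the structured order `r`: `x_i` is set to true
iff `D_i ≺ E_i ≺ F_i`. -/
def Extracted {n m s₁ s₂ : ℕ} (r : Vtx n m s₁ s₂ → Vtx n m s₁ s₂ → Prop)
    (σ : Fin n → Bool) : Prop :=
  ∀ i : Fin n, σ i = true ↔
    (Before r (mset (.D i)) (mset (.E i)) ∧ Before r (mset (.E i)) (mset (.F i)))

section KeyAux

variable {n m s₁ s₂ : ℕ}

private lemma digitAux {b a a' c c' : ℕ} (hc : c < b) (hc' : c' < b)
    (h : a * b + c = a' * b + c') : a = a' ∧ c = c' := by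
  have hb : 0 < b := Nat.pos_of_ne_zero (by omega)
  have h1 : c = c' := by
    have h2 := congrArg (· % b) h
    simpa [add_comm, Nat.add_mul_mod_self_right, Nat.mod_eq_of_lt hc,
      Nat.mod_eq_of_lt hc'] using h2
  refine ⟨Nat.eq_of_mul_eq_mul_right hb (by omega), h1⟩

def slotF {n m : ℕ} (nv : Fin m → Fin n) : ModName n m → ℕ
  | .A i => 8 * i
  | .B i => 8 * i + 1
  | .C i => 8 * i + 2
  | .D i => 8 * i + 6
  | .E i => 8 * i + 3
  | .F i => 8 * i + 4
  | .T j => 8 * (nv j : ℕ) + 5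

def subF {n m : ℕ} : ModName n m → ℕ
  | .T j => (j : ℕ)
  | _ => 0

def mkeyF {n m : ℕ} (nv : Fin m → Fin n) (M : ModName n m) : ℕ :=
  slotF nv M * (m + 1) + subF M

def keyF {n m : ℕ} (s₁ s₂ : ℕ) (nv : Fin m → Fin n) (v : Vtx n m s₁ s₂) : ℕ :=
  mkeyF nv v.1 * (s₁ + s₂ + 3) + (v.2 : ℕ)

lemma subF_lt (M : ModName n m) : subF M < m + 1 := by
  cases M <;> simp [subF] <;> exact Nat.lt_succ_of_lt (Fin.is_lt _)

lemma msize_lt (hs₂ : 0 < s₂) (M : ModName n m) : msize n m s₁ s₂ M < s₁ + s₂ + 3 := by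
  cases M <;> simp only [msize] <;> first
    | omega
    | (split <;> omega)

lemma vtx_ext {v w : Vtx n m s₁ s₂} (h1 : v.1 = w.1) (h2 : (v.2 : ℕ) = (w.2 : ℕ)) :
    v = w := by
  rcases v with ⟨M, a⟩
  rcases w with ⟨M', b⟩
  dsimp at h1 h2
  subst h1
  simp_all [Fin.ext_iff]

lemma mkeyF_inj (nv : Fin m → Fin n) {M M' : ModName n m}
    (h : mkeyF nv M = mkeyF nv M') : M = M' := by
  obtain ⟨h1, h2⟩ := digitAux (subF_lt M) (subF_lt M') h
  cases M <;> cases M' <;> simp_all [slotF, subF, Fin.ext_iff] <;> omega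

lemma mkeyF_lt_of_slot {nv : Fin m → Fin n} {M M' : ModName n m}
    (h : slotF nv M < slotF nv M') : mkeyF nv M < mkeyF nv M' := by
  have h1 := subF_lt (n := n) M
  have h2 : (slotF nv M + 1) * (m + 1) ≤ slotF nv M' * (m + 1) :=
    Nat.mul_le_mul_right _ h
  unfold mkeyF
  nlinarith

lemma slot_le_of_mkeyF_lt {nv : Fin m → Fin n} {M M' : ModName n m}
    (h : mkeyF nv M < mkeyF nv M') : slotF nv M ≤ slotF nv M' := by
  by_contra hc
  push_neg at hc
  exact absurd (mkeyF_lt_of_slot hc) (by omega)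

lemma keyF_lt_of_mkey (hs₂ : 0 < s₂) {nv : Fin m → Fin n} {u v : Vtx n m s₁ s₂}
    (h : mkeyF nv u.1 < mkeyF nv v.1) : keyF s₁ s₂ nv u < keyF s₁ s₂ nv v := by
  have h1 : (u.2 : ℕ) < s₁ + s₂ + 3 := lt_trans u.2.isLt (msize_lt hs₂ u.1)
  have h2 : (mkeyF nv u.1 + 1) * (s₁ + s₂ + 3) ≤ mkeyF nv v.1 * (s₁ + s₂ + 3) :=
    Nat.mul_le_mul_right _ h
  unfold keyF
  nlinarith

lemma keyF_inj (hs₂ : 0 < s₂) (nv : Fin m → Fin n) :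
    Function.Injective (keyF s₁ s₂ nv) := by
  intro u v h
  obtain ⟨h1, h2⟩ := digitAux (lt_trans u.2.isLt (msize_lt hs₂ u.1))
    (lt_trans v.2.isLt (msize_lt hs₂ v.1)) h
  exact vtx_ext (mkeyF_inj nv h1) h2

lemma grp_slot_bounds (nv : Fin m → Fin n) {M : ModName n m} {i : Fin n}
    (h : grp? M = some i) : 8 * (i : ℕ) ≤ slotF nv M ∧ slotF nv M ≤ 8 * (i : ℕ) + 6 := by
  cases M <;> simp_all [grp?, slotF] <;> omega

lemma eq_T_of_clause {M : ModName n m} {j : Fin m} (h : clause? M = some j) :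
    M = .T j := by
  cases M <;> simp_all [clause?]

lemma clause_none_of_grp {M : ModName n m} {i : Fin n} (h : grp? M = some i) :
    clause? M = none := by
  cases M <;> simp_all [grp?, clause?]

lemma grp_cases {M : ModName n m} {i : Fin n} (h : grp? M = some i) :
    M = .A i ∨ M = .B i ∨ M = .C i ∨ M = .D i ∨ M = .E i ∨ M = .F i := by
  cases M <;> simp_all [grp?]

lemma eq_of_grp_rk {M M' : ModName n m} {i : Fin n} (h : grp? M = some i)
    (h' : grp? M' = some i) (hr : rk M = rk M') : M = M' := by
  rcases grp_cases h with rfl | rfl | rfl | rfl | rfl | rfl <;>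
    rcases grp_cases h' with rfl | rfl | rfl | rfl | rfl | rfl <;> simp_all [rk]

lemma tBeats_zero (o : Option Bool) : tBeats o 0 := by
  rcases o with _ | b
  · exact Or.inl rfl
  · cases b
    · exact Or.inl rfl
    · exact Or.inl rfl

lemma rk_le_five {M : ModName n m} {i : Fin n} (h : grp? M = some i) : rk M ≤ 5 := by
  cases M <;> simp_all [grp?, rk]

lemma var_msize_le {M : ModName n m} {i : Fin n} (h : grp? M = some i) :
    msize n m s₁ s₂ M ≤ s₁ + 3 := by
  cases M <;> simp_all [grp?, msize] <;> split <;> omega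

def ecode : ℕ → Fin 3 := fun r => if r = 0 ∨ r = 4 then 0 else if r = 1 ∨ r = 3 then 1 else 2

lemma ecode_inj_pos {o : Option Bool} {r r' : ℕ} (h : tBeats o r) (h' : tBeats o r')
    (he : ecode r = ecode r') : r = r' := by
  rcases o with _ | b
  · simp only [tBeats] at h h'
    rcases h with rfl | rfl | rfl <;> rcases h' with rfl | rfl | rfl <;> revert he <;> decide
  · cases b <;> simp only [tBeats] at h h' <;>
      rcases h with rfl | rfl | rfl <;> rcases h' with rfl | rfl | rfl <;>
      revert he <;> decide

lemma ecode_inj_neg {o : Option Bool} {r r' : ℕ} (h : ¬ tBeats o r) (h' : ¬ tBeats o r')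
    (h5 : r ≤ 5) (h5' : r' ≤ 5) (he : ecode r = ecode r') : r = r' := by
  rcases o with _ | b
  · simp only [tBeats] at h h'
    have hr : r = 3 ∨ r = 4 ∨ r = 5 := by omega
    have hr' : r' = 3 ∨ r' = 4 ∨ r' = 5 := by omega
    rcases hr with rfl | rfl | rfl <;> rcases hr' with rfl | rfl | rfl <;>
      revert he <;> decide
  · cases b <;> simp only [tBeats] at h h'
    · have hr : r = 1 ∨ r = 4 ∨ r = 5 := by omega
      have hr' : r' = 1 ∨ r' = 4 ∨ r' = 5 := by omega
      rcases hr with rfl | rfl | rfl <;> rcases hr' with rfl | rfl | rfl <;>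
        revert he <;> decide
    · have hr : r = 2 ∨ r = 3 ∨ r = 4 := by omega
      have hr' : r' = 2 ∨ r' = 3 ∨ r' = 4 := by omega
      rcases hr with rfl | rfl | rfl <;> rcases hr' with rfl | rfl | rfl <;>
        revert he <;> decide

end KeyAux

section CoverAux

variable {n m s₁ s₂ : ℕ}

def covS1 (n m s₁ s₂ : ℕ) : Set (Vtx n m s₁ s₂ × Vtx n m s₁ s₂) :=
  {p | ∃ i, p.1.1 = .D i ∧ p.2.1 = .E i}

def covS2 (n m s₁ s₂ : ℕ) : Set (Vtx n m s₁ s₂ × Vtx n m s₁ s₂) :=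
  {p | ∃ j j', p.1.1 = .T j ∧ p.2.1 = .T j'}

def covS3 (s₁ s₂ : ℕ) (occ : Fin n → Fin m → Option Bool) (nv : Fin m → Fin n) :
    Set (Vtx n m s₁ s₂ × Vtx n m s₁ s₂) :=
  {p | ∃ j i, (p.1.1 = .T j ∧ grp? p.2.1 = some i ∧ (i : ℕ) < (nv j : ℕ) ∧
      tBeats (occ i j) (rk p.2.1)) ∨
    (grp? p.1.1 = some i ∧ p.2.1 = .T j ∧ (nv j : ℕ) < (i : ℕ) ∧
      ¬ tBeats (occ i j) (rk p.1.1))}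

def covS4 (s₁ s₂ : ℕ) (nv : Fin m → Fin n) :
    Set (Vtx n m s₁ s₂ × Vtx n m s₁ s₂) :=
  {p | ∃ j, p.1.1 = .T j ∧ grp? p.2.1 = some (nv j) ∧ (rk p.2.1 = 0 ∨ rk p.2.1 = 2)}

lemma fas_subset_cover (hs₂ : 0 < s₂) (occ : Fin n → Fin m → Option Bool)
    (nv : Fin m → Fin n) (hnv : ∀ j, occ (nv j) j = some false) :
    fasSet (arc occ) (fun u v : Vtx n m s₁ s₂ => keyF s₁ s₂ nv u < keyF s₁ s₂ nv v) ⊆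
      covS1 n m s₁ s₂ ∪ covS2 n m s₁ s₂ ∪ covS3 s₁ s₂ occ nv ∪ covS4 s₁ s₂ nv := by
  rintro ⟨⟨M, a⟩, ⟨M', b⟩⟩ ⟨harc, hlt⟩
  dsimp only at harc hlt
  have hnk : ¬ mkeyF nv M < mkeyF nv M' := fun h =>
    absurd (keyF_lt_of_mkey hs₂ (u := ⟨M, a⟩) (v := ⟨M', b⟩) h) (by omega)
  rcases harc with ⟨heq, hidx⟩ | ⟨hne, hmod⟩
  · exfalso
    dsimp only at heq hidx
    subst heq
    unfold keyF at hlt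
    dsimp only at hlt
    omega
  · dsimp only at hne hmod
    have hmklt : mkeyF nv M' < mkeyF nv M := by
      rcases Nat.lt_trichotomy (mkeyF nv M') (mkeyF nv M) with h | h | h
      · exact h
      · exact absurd (mkeyF_inj nv h.symm) hne
      · exact absurd h hnk
    have hsl : slotF nv M' ≤ slotF nv M := slot_le_of_mkeyF_lt hmklt
    rcases hmod with ⟨i, i', hg1, hg2, hcase⟩ | ⟨j, j', hc1, hc2, hjj⟩ |
      ⟨j, i, hc1, hg2, htb⟩ | ⟨i, j, hg1, hc2, hntb⟩
    · -- group-group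
      obtain ⟨b1l, b1r⟩ := grp_slot_bounds nv hg1
      obtain ⟨b2l, b2r⟩ := grp_slot_bounds nv hg2
      rcases hcase with hii | ⟨rfl, hrk⟩
      · exfalso
        have : (i : ℕ) < (i' : ℕ) := hii
        omega
      · rcases grp_cases hg1 with rfl | rfl | rfl | rfl | rfl | rfl <;>
          rcases grp_cases hg2 with rfl | rfl | rfl | rfl | rfl | rfl <;>
          first
            | (exact Or.inl (Or.inl (Or.inl ⟨i, rfl, rfl⟩)))
            | (exact absurd rfl hne)
            | (exfalso; simp only [slotF, rk] at hsl hrk; omega)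
            | (exfalso; simp [rk] at hrk)
    · exact Or.inl (Or.inl (Or.inr ⟨j, j', eq_T_of_clause hc1, eq_T_of_clause hc2⟩))
    · -- T against variable group
      have e1 := eq_T_of_clause hc1
      subst e1
      have hsu : slotF nv (ModName.T j : ModName n m) = 8 * (nv j : ℕ) + 5 := rfl
      obtain ⟨b2l, b2r⟩ := grp_slot_bounds nv hg2
      by_cases hij : (i : ℕ) < (nv j : ℕ)
      · exact Or.inl (Or.inr ⟨j, i, Or.inl ⟨rfl, hg2, hij, htb⟩⟩)
      · have hieq : i = nv j := Fin.ext (by omega)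
        subst hieq
        rw [hnv j] at htb
        right
        rcases grp_cases hg2 with rfl | rfl | rfl | rfl | rfl | rfl
        · exact ⟨j, rfl, hg2, Or.inl rfl⟩
        · exact absurd htb (by simp [tBeats, rk])
        · exact ⟨j, rfl, hg2, Or.inr rfl⟩
        · exfalso; simp only [slotF] at hsl; omega
        · exact absurd htb (by simp [tBeats, rk])
        · exact absurd htb (by simp [tBeats, rk])
    · -- variable group against T
      have e2 := eq_T_of_clause hc2
      subst e2
      have hsv : slotF nv (ModName.T j : ModName n m) = 8 * (nv j : ℕ) + 5 := rfl
      obtain ⟨b1l, b1r⟩ := grp_slot_bounds nv hg1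
      by_cases hij : (nv j : ℕ) < (i : ℕ)
      · exact Or.inl (Or.inr ⟨j, i, Or.inr ⟨hg1, rfl, hij, hntb⟩⟩)
      · have hieq : i = nv j := Fin.ext (by omega)
        subst hieq
        rw [hnv j] at hntb
        exfalso
        rcases grp_cases hg1 with rfl | rfl | rfl | rfl | rfl | rfl <;>
          first
            | (simp only [slotF] at hsl hsv; omega)
            | (exact hntb (by simp [tBeats, rk]))
end CoverAux

section CountAux

variable {n m s₁ s₂ : ℕ}

lemma ncard_covS1 (hn : 0 < n) (hs₁ : 0 < s₁) :
    (covS1 n m s₁ s₂).ncard ≤ n * (s₁ * (s₁ + 3)) := by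
  classical
  have h := Set.ncard_le_ncard_of_injOn
    (s := covS1 n m s₁ s₂)
    (t := (Set.univ : Set (Fin n × Fin s₁ × Fin (s₁ + 3))))
    (fun p => ((grp? p.1.1).getD ⟨0, hn⟩,
      ⟨(p.1.2 : ℕ) % s₁, Nat.mod_lt _ hs₁⟩,
      ⟨(p.2.2 : ℕ) % (s₁ + 3), Nat.mod_lt _ (by omega)⟩))
    (fun a _ => Set.mem_univ _)
    ?_ Set.finite_univ
  · refine le_trans h (le_of_eq ?_)
    simp [Set.ncard_univ, Nat.card_eq_fintype_card]
  · rintro ⟨⟨M1, a1⟩, ⟨M2, b1⟩⟩ ⟨i, h1, h2⟩ ⟨⟨N1, a2⟩, ⟨N2, b2⟩⟩ ⟨i', h1', h2'⟩ hf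
    dsimp only at h1 h2 h1' h2'
    subst h1; subst h2; subst h1'; subst h2'
    simp only [Prod.mk.injEq, Fin.mk.injEq, grp?, Option.getD_some] at hf
    obtain ⟨rfl, hfa, hfb⟩ := hf
    have ha1 : (a1 : ℕ) < s₁ := a1.isLt
    have ha2 : (a2 : ℕ) < s₁ := a2.isLt
    have hb1 : (b1 : ℕ) < s₁ + 3 := lt_of_lt_of_le b1.isLt (var_msize_le (M := .E i) rfl)
    have hb2 : (b2 : ℕ) < s₁ + 3 := lt_of_lt_of_le b2.isLt (var_msize_le (M := .E i) rfl)
    rw [Nat.mod_eq_of_lt ha1, Nat.mod_eq_of_lt ha2] at hfa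
    rw [Nat.mod_eq_of_lt hb1, Nat.mod_eq_of_lt hb2] at hfb
    exact Prod.ext (vtx_ext rfl hfa) (vtx_ext rfl hfb)

lemma ncard_covS2 (hm : 0 < m) (hs₂ : 0 < s₂) :
    (covS2 n m s₁ s₂).ncard ≤ m * (s₂ * (m * s₂)) := by
  classical
  have h := Set.ncard_le_ncard_of_injOn
    (s := covS2 n m s₁ s₂)
    (t := (Set.univ : Set (Fin m × Fin s₂ × Fin m × Fin s₂)))
    (fun p => ((clause? p.1.1).getD ⟨0, hm⟩,
      ⟨(p.1.2 : ℕ) % s₂, Nat.mod_lt _ hs₂⟩,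
      (clause? p.2.1).getD ⟨0, hm⟩,
      ⟨(p.2.2 : ℕ) % s₂, Nat.mod_lt _ hs₂⟩))
    (fun a _ => Set.mem_univ _)
    ?_ Set.finite_univ
  · refine le_trans h (le_of_eq ?_)
    simp [Set.ncard_univ, Nat.card_eq_fintype_card]
  · rintro ⟨⟨M1, a1⟩, ⟨M2, b1⟩⟩ ⟨j, j2, h1, h2⟩ ⟨⟨N1, a2⟩, ⟨N2, b2⟩⟩ ⟨j', j2', h1', h2'⟩ hf
    dsimp only at h1 h2 h1' h2'
    subst h1; subst h2; subst h1'; subst h2'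
    simp only [Prod.mk.injEq, Fin.mk.injEq, clause?, Option.getD_some] at hf
    obtain ⟨rfl, hfa, rfl, hfb⟩ := hf
    have ha1 : (a1 : ℕ) < s₂ := a1.isLt
    have ha2 : (a2 : ℕ) < s₂ := a2.isLt
    have hb1 : (b1 : ℕ) < s₂ := b1.isLt
    have hb2 : (b2 : ℕ) < s₂ := b2.isLt
    rw [Nat.mod_eq_of_lt ha1, Nat.mod_eq_of_lt ha2] at hfa
    rw [Nat.mod_eq_of_lt hb1, Nat.mod_eq_of_lt hb2] at hfb
    exact Prod.ext (vtx_ext rfl hfa) (vtx_ext rfl hfb)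

lemma ncard_covS4 (hm : 0 < m) (hs₁ : 0 < s₁) (hs₂ : 0 < s₂) (nv : Fin m → Fin n) :
    (covS4 s₁ s₂ nv).ncard ≤ m * (2 * (s₁ * s₂)) := by
  classical
  have h := Set.ncard_le_ncard_of_injOn
    (s := covS4 s₁ s₂ nv)
    (t := (Set.univ : Set (Fin m × Fin 2 × Fin s₁ × Fin s₂)))
    (fun p => ((clause? p.1.1).getD ⟨0, hm⟩,
      (if rk p.2.1 = 0 then (0 : Fin 2) else 1),
      ⟨(p.2.2 : ℕ) % s₁, Nat.mod_lt _ hs₁⟩,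
      ⟨(p.1.2 : ℕ) % s₂, Nat.mod_lt _ hs₂⟩))
    (fun a _ => Set.mem_univ _)
    ?_ Set.finite_univ
  · refine le_trans h (le_of_eq ?_)
    simp [Set.ncard_univ, Nat.card_eq_fintype_card]
  · rintro ⟨⟨M1, a1⟩, ⟨M2, b1⟩⟩ ⟨j, h1, h2, h3⟩ ⟨⟨N1, a2⟩, ⟨N2, b2⟩⟩ ⟨j', h1', h2', h3'⟩ hf
    dsimp only at h1 h2 h3 h1' h2' h3'
    subst h1; subst h1'
    simp only [Prod.mk.injEq, Fin.mk.injEq, clause?, Option.getD_some] at hf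
    obtain ⟨rfl, hfr, hfb, hfa⟩ := hf
    have hrk : rk M2 = rk N2 := by
      rcases h3 with h3 | h3 <;> rcases h3' with h3' | h3' <;>
        simp [h3, h3'] at hfr ⊢
    have hM : M2 = N2 := eq_of_grp_rk h2 h2' hrk
    subst hM
    have hsz : msize n m s₁ s₂ M2 = s₁ := by
      rcases grp_cases h2 with rfl | rfl | rfl | rfl | rfl | rfl <;>
        first
          | rfl
          | (exfalso; rcases h3 with h3 | h3 <;> simp [rk] at h3)
    have ha1 : (a1 : ℕ) < s₂ := a1.isLt
    have ha2 : (a2 : ℕ) < s₂ := a2.isLt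
    have hb1 : (b1 : ℕ) < s₁ := by have := b1.isLt; omega
    have hb2 : (b2 : ℕ) < s₁ := by have := b2.isLt; omega
    rw [Nat.mod_eq_of_lt ha1, Nat.mod_eq_of_lt ha2] at hfa
    rw [Nat.mod_eq_of_lt hb1, Nat.mod_eq_of_lt hb2] at hfb
    exact Prod.ext (vtx_ext rfl hfa) (vtx_ext rfl hfb)

end CountAux

section Count3

variable {n m s₁ s₂ : ℕ}

def tside {n m s₁ s₂ : ℕ} (p : Vtx n m s₁ s₂ × Vtx n m s₁ s₂) : Vtx n m s₁ s₂ :=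
  if (clause? p.1.1).isSome then p.1 else p.2

def vside {n m s₁ s₂ : ℕ} (p : Vtx n m s₁ s₂ × Vtx n m s₁ s₂) : Vtx n m s₁ s₂ :=
  if (clause? p.1.1).isSome then p.2 else p.1

def shrinkI {n : ℕ} (hn2 : 2 ≤ n) (c : Fin n) (i : Fin n) : Fin (n - 1) :=
  ⟨if (i : ℕ) < (c : ℕ) then (i : ℕ) else (i : ℕ) - 1, by
    have h1 := i.isLt; have h2 := c.isLt; split <;> omega⟩

def covF3 {n m s₁ s₂ : ℕ} (hn2 : 2 ≤ n) (hm : 0 < m) (hs₂ : 0 < s₂)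
    (nv : Fin m → Fin n) (p : Vtx n m s₁ s₂ × Vtx n m s₁ s₂) :
    Fin m × Fin (n - 1) × Fin 3 × Fin (s₁ + 3) × Fin s₂ :=
  ((clause? (tside p).1).getD ⟨0, hm⟩,
   shrinkI hn2 (nv ((clause? (tside p).1).getD ⟨0, hm⟩))
     ((grp? (vside p).1).getD ⟨0, by omega⟩),
   ecode (rk (vside p).1),
   ⟨((vside p).2 : ℕ) % (s₁ + 3), Nat.mod_lt _ (by omega)⟩,
   ⟨((tside p).2 : ℕ) % s₂, Nat.mod_lt _ hs₂⟩)

lemma covF3_specL {hn2 : 2 ≤ n} (hm : 0 < m) (hs₂ : 0 < s₂) (nv : Fin m → Fin n)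
    {j : Fin m} {M : ModName n m} {i : Fin n} (hg : grp? M = some i)
    (a : Fin (msize n m s₁ s₂ (.T j))) (b : Fin (msize n m s₁ s₂ M)) :
    covF3 hn2 hm hs₂ nv (⟨.T j, a⟩, ⟨M, b⟩) =
      (j, shrinkI hn2 (nv j) i, ecode (rk M),
        ⟨(b : ℕ) % (s₁ + 3), Nat.mod_lt _ (by omega)⟩,
        ⟨(a : ℕ) % s₂, Nat.mod_lt _ hs₂⟩) := by
  have hc : clause? (ModName.T j : ModName n m) = some j := rfl
  have ht : tside (⟨ModName.T j, a⟩, (⟨M, b⟩ : Vtx n m s₁ s₂)) = ⟨ModName.T j, a⟩ := by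
    simp [tside, hc]
  have hv : vside (⟨ModName.T j, a⟩, (⟨M, b⟩ : Vtx n m s₁ s₂)) = ⟨M, b⟩ := by
    simp [vside, hc]
  have ht1 := congrArg (Sigma.fst) ht
  have hv1 := congrArg (Sigma.fst) hv
  have ht2 := congrArg (fun v : Vtx n m s₁ s₂ => (v.2 : ℕ)) ht
  have hv2 := congrArg (fun v : Vtx n m s₁ s₂ => (v.2 : ℕ)) hv
  dsimp only at ht1 hv1 ht2 hv2
  unfold covF3
  simp [hc, hg, ht1, hv1, ht2, hv2]

lemma covF3_specR {hn2 : 2 ≤ n} (hm : 0 < m) (hs₂ : 0 < s₂) (nv : Fin m → Fin n)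
    {j : Fin m} {M : ModName n m} {i : Fin n} (hg : grp? M = some i)
    (a : Fin (msize n m s₁ s₂ M)) (b : Fin (msize n m s₁ s₂ (.T j))) :
    covF3 hn2 hm hs₂ nv (⟨M, a⟩, ⟨.T j, b⟩) =
      (j, shrinkI hn2 (nv j) i, ecode (rk M),
        ⟨(a : ℕ) % (s₁ + 3), Nat.mod_lt _ (by omega)⟩,
        ⟨(b : ℕ) % s₂, Nat.mod_lt _ hs₂⟩) := by
  have hc : clause? (ModName.T j : ModName n m) = some j := rfl
  have ht : tside (⟨M, a⟩, (⟨ModName.T j, b⟩ : Vtx n m s₁ s₂)) = ⟨ModName.T j, b⟩ := by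
    simp [tside, clause_none_of_grp hg]
  have hv : vside (⟨M, a⟩, (⟨ModName.T j, b⟩ : Vtx n m s₁ s₂)) = ⟨M, a⟩ := by
    simp [vside, clause_none_of_grp hg]
  have ht1 := congrArg (Sigma.fst) ht
  have hv1 := congrArg (Sigma.fst) hv
  have ht2 := congrArg (fun v : Vtx n m s₁ s₂ => (v.2 : ℕ)) ht
  have hv2 := congrArg (fun v : Vtx n m s₁ s₂ => (v.2 : ℕ)) hv
  dsimp only at ht1 hv1 ht2 hv2
  unfold covF3
  simp [hc, hg, ht1, hv1, ht2, hv2]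

lemma ncard_covS3 (hm : 0 < m) (hs₂ : 0 < s₂) (occ : Fin n → Fin m → Option Bool)
    (nv : Fin m → Fin n) :
    (covS3 s₁ s₂ occ nv).ncard ≤ m * ((n - 1) * (3 * ((s₁ + 3) * s₂))) := by
  classical
  by_cases hn2 : 2 ≤ n
  · have h := Set.ncard_le_ncard_of_injOn
      (s := covS3 s₁ s₂ occ nv)
      (t := (Set.univ : Set (Fin m × Fin (n - 1) × Fin 3 × Fin (s₁ + 3) × Fin s₂)))
      (covF3 hn2 hm hs₂ nv)
      (fun a _ => Set.mem_univ _)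
      ?_ Set.finite_univ
    · refine le_trans h (le_of_eq ?_)
      rw [Set.ncard_univ, Nat.card_eq_fintype_card]
      simp only [Fintype.card_prod, Fintype.card_fin]
    · rintro ⟨⟨M1, a1⟩, ⟨M2, b1⟩⟩ ⟨j, i, hp⟩ ⟨⟨N1, a2⟩, ⟨N2, b2⟩⟩ ⟨j', i', hq⟩ hf
      rcases hp with ⟨e1, hg, hlt, htb⟩ | ⟨hg, e1, hlt, htb⟩ <;>
        rcases hq with ⟨e1', hg', hlt', htb'⟩ | ⟨hg', e1', hlt', htb'⟩ <;>
        dsimp only at e1 hg e1' hg' htb htb' <;> subst e1 <;> subst e1'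
      -- case L L
      · rw [covF3_specL hm hs₂ nv hg, covF3_specL hm hs₂ nv hg'] at hf
        simp only [Prod.mk.injEq, Fin.mk.injEq, shrinkI] at hf
        obtain ⟨rfl, hfi, hfr, hfv, hft⟩ := hf
        rw [if_pos hlt, if_pos hlt'] at hfi
        have hii : i = i' := Fin.ext hfi
        subst hii
        have hr : rk M2 = rk N2 := ecode_inj_pos htb htb' hfr
        have hM : M2 = N2 := eq_of_grp_rk hg hg' hr
        subst hM
        have hv1 : (b1 : ℕ) < s₁ + 3 := lt_of_lt_of_le b1.isLt (var_msize_le hg)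
        have hv2 : (b2 : ℕ) < s₁ + 3 := lt_of_lt_of_le b2.isLt (var_msize_le hg)
        rw [Nat.mod_eq_of_lt hv1, Nat.mod_eq_of_lt hv2] at hfv
        have ht1 : (a1 : ℕ) < s₂ := a1.isLt
        have ht2 : (a2 : ℕ) < s₂ := a2.isLt
        rw [Nat.mod_eq_of_lt ht1, Nat.mod_eq_of_lt ht2] at hft
        exact Prod.ext (vtx_ext rfl hft) (vtx_ext rfl hfv)
      -- case L R
      · exfalso
        rw [covF3_specL hm hs₂ nv hg, covF3_specR hm hs₂ nv hg'] at hf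
        simp only [Prod.mk.injEq, Fin.mk.injEq, shrinkI] at hf
        obtain ⟨rfl, hfi, -, -, -⟩ := hf
        rw [if_pos hlt, if_neg (by omega)] at hfi
        omega
      -- case R L
      · exfalso
        rw [covF3_specR hm hs₂ nv hg, covF3_specL hm hs₂ nv hg'] at hf
        simp only [Prod.mk.injEq, Fin.mk.injEq, shrinkI] at hf
        obtain ⟨rfl, hfi, -, -, -⟩ := hf
        rw [if_neg (by omega), if_pos hlt'] at hfi
        omega
      -- case R R
      · rw [covF3_specR hm hs₂ nv hg, covF3_specR hm hs₂ nv hg'] at hf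
        simp only [Prod.mk.injEq, Fin.mk.injEq, shrinkI] at hf
        obtain ⟨rfl, hfi, hfr, hfv, hft⟩ := hf
        rw [if_neg (by omega), if_neg (by omega)] at hfi
        have hii : i = i' := Fin.ext (by omega)
        subst hii
        have hr : rk M1 = rk N1 :=
          ecode_inj_neg htb htb' (rk_le_five hg) (rk_le_five hg') hfr
        have hM : M1 = N1 := eq_of_grp_rk hg hg' hr
        subst hM
        have hv1 : (a1 : ℕ) < s₁ + 3 := lt_of_lt_of_le a1.isLt (var_msize_le hg)
        have hv2 : (a2 : ℕ) < s₁ + 3 := lt_of_lt_of_le a2.isLt (var_msize_le hg)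
        rw [Nat.mod_eq_of_lt hv1, Nat.mod_eq_of_lt hv2] at hfv
        have ht1 : (b1 : ℕ) < s₂ := b1.isLt
        have ht2 : (b2 : ℕ) < s₂ := b2.isLt
        rw [Nat.mod_eq_of_lt ht1, Nat.mod_eq_of_lt ht2] at hft
        exact Prod.ext (vtx_ext rfl hfv) (vtx_ext rfl hft)
  · have hempty : covS3 s₁ s₂ occ nv = (∅ : Set (Vtx n m s₁ s₂ × Vtx n m s₁ s₂)) := by
      ext p
      simp only [covS3, Set.mem_setOf_eq, Set.mem_empty_iff_false, iff_false]
      rintro ⟨j, i, ⟨-, -, hlt, -⟩ | ⟨-, -, hlt, -⟩⟩ <;>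
        · have h1 := i.isLt; have h2 := (nv j).isLt; omega
    rw [hempty]
    simp

end Count3

/-- There is a linear order on the vertices of `T_φ` whose implied feedback arc set has
size at most `n·s₁² + (3n−1)m·s₁·s₂ + 3n·s₁ + m²·s₂² + 9m(n−1)·s₂`. -/
theorem stmt11 (n m s₁ s₂ : ℕ) (hn : 0 < n) (hm : 0 < m) (hs₁ : 0 < s₁) (hs₂ : 0 < s₂)
    (occ : Fin n → Fin m → Option Bool)
    (h3lit : ∀ j : Fin m, ({i : Fin n | occ i j ≠ none}).ncard ≤ 3)
    (hallF : ∀ j : Fin m, ∃ i : Fin n, occ i j = some false) :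
    ∃ r : Vtx n m s₁ s₂ → Vtx n m s₁ s₂ → Prop, IsStrictTotalOrder (Vtx n m s₁ s₂) r ∧
      (fasSet (arc occ) r).ncard ≤
        n * s₁ ^ 2 + (3 * n - 1) * m * s₁ * s₂ + 3 * n * s₁ + m ^ 2 * s₂ ^ 2 +
          9 * m * (n - 1) * s₂ := by
  classical
  choose nv hnv using hallF
  refine ⟨fun u v => keyF s₁ s₂ nv u < keyF s₁ s₂ nv v, ?_, ?_⟩
  · exact { trichotomous := fun a b => by
              rcases Nat.lt_trichotomy (keyF s₁ s₂ nv a) (keyF s₁ s₂ nv b) with h | h | h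
              · exact fun h1 _ => absurd h h1
              · exact fun _ _ => keyF_inj hs₂ nv h
              · exact fun _ h2 => absurd h h2,
            irrefl := fun a => lt_irrefl _,
            trans := fun a b c hab hbc => lt_trans hab hbc }
  · obtain ⟨k, rfl⟩ : ∃ k, n = k + 1 := ⟨n - 1, by omega⟩
    have hsub := fas_subset_cover (s₁ := s₁) hs₂ occ nv hnv
    have c1 := ncard_covS1 (n := k + 1) (m := m) (s₂ := s₂) hn hs₁
    have c2 := ncard_covS2 (n := k + 1) (m := m) (s₁ := s₁) hm hs₂
    have c3 := ncard_covS3 (s₁ := s₁) hm hs₂ occ nv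
    have c4 := ncard_covS4 (s₁ := s₁) hm hs₁ hs₂ nv
    have e1 : 3 * (k + 1) - 1 = 3 * k + 2 := by omega
    have e2 : k + 1 - 1 = k := by omega
    rw [e1, e2]
    rw [e2] at c3
    calc (fasSet (arc occ)
          (fun u v : Vtx (k + 1) m s₁ s₂ => keyF s₁ s₂ nv u < keyF s₁ s₂ nv v)).ncard
        ≤ (covS1 (k + 1) m s₁ s₂ ∪ covS2 (k + 1) m s₁ s₂ ∪ covS3 s₁ s₂ occ nv ∪
            covS4 s₁ s₂ nv).ncard := Set.ncard_le_ncard hsub (Set.toFinite _)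
      _ ≤ (covS1 (k + 1) m s₁ s₂ ∪ covS2 (k + 1) m s₁ s₂ ∪ covS3 s₁ s₂ occ nv).ncard +
            (covS4 s₁ s₂ nv).ncard := Set.ncard_union_le _ _
      _ ≤ ((covS1 (k + 1) m s₁ s₂ ∪ covS2 (k + 1) m s₁ s₂).ncard +
            (covS3 s₁ s₂ occ nv).ncard) + (covS4 s₁ s₂ nv).ncard :=
          Nat.add_le_add_right (Set.ncard_union_le _ _) _
      _ ≤ (((covS1 (k + 1) m s₁ s₂).ncard + (covS2 (k + 1) m s₁ s₂).ncard) +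
            (covS3 s₁ s₂ occ nv).ncard) + (covS4 s₁ s₂ nv).ncard :=
          Nat.add_le_add_right (Nat.add_le_add_right (Set.ncard_union_le _ _) _) _
      _ ≤ (((k + 1) * (s₁ * (s₁ + 3)) + m * (s₂ * (m * s₂))) +
            m * (k * (3 * ((s₁ + 3) * s₂)))) + m * (2 * (s₁ * s₂)) := by
          exact add_le_add (add_le_add (add_le_add c1 c2) c3) c4
      _ = (k + 1) * s₁ ^ 2 + (3 * k + 2) * m * s₁ * s₂ + 3 * (k + 1) * s₁ +
            m ^ 2 * s₂ ^ 2 + 9 * m * k * s₂ := by ring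
end

section
/- Suppose s₁² > (3n−1)m·s₁·s₂ + 3n·s₁ + m²·s₂² + 9m(n−1)·s₂, and let B = n·s₁² + (3n−1)m·s₁·s₂ + 3n·s₁ + m²·s₂² + 9m(n−1)·s₂. Then every linear order on the vertices of T_φ in which each of the 6n+m modules is contiguous and whose implied feedback arc set has size at most B is structured. -/
/-! ### Auxiliary lemmas -/

section Aux

variable {n m s₁ s₂ : ℕ} {r : Vtx n m s₁ s₂ → Vtx n m s₁ s₂ → Prop}

lemma mpos (hs₁ : 0 < s₁) (hs₂ : 0 < s₂) (M : ModName n m) : 0 < msize n m s₁ s₂ M := by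
  cases M <;> simp only [msize] <;> first | omega | (split <;> omega)

lemma size_of_grp {M : ModName n m} {i : Fin n} (h : grp? M = some i) :
    s₁ ≤ msize n m s₁ s₂ M := by
  cases M <;> simp only [msize, grp?] at h ⊢ <;> first | rfl | omega | (split <;> omega) | exact absurd h (by simp)

lemma modTotal (hr : IsStrictTotalOrder (Vtx n m s₁ s₂) r)
    (hcontig : ∀ M : ModName n m, Contig r (mset M))
    {M M' : ModName n m} (hne : M ≠ M') :
    Before r (mset M) (mset M') ∨ Before r (mset M') (mset M) := by
  by_contra h
  push_neg at h
  obtain ⟨h1, h2⟩ := h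
  simp only [Before, not_forall] at h1 h2
  obtain ⟨u, hu, v, hv, huv⟩ := h1
  obtain ⟨a, ha, b, hb, hab⟩ := h2
  have huM : u.1 = M := hu
  have hvM : v.1 = M' := hv
  have haM : a.1 = M' := ha
  have hbM : b.1 = M := hb
  have hne_uv : u ≠ v := by intro e; rw [e, hvM] at huM; exact hne huM.symm
  have hne_ab : a ≠ b := by intro e; rw [e, hbM] at haM; exact hne haM
  have hvu : r v u := by
    rcases (show r u v ∨ u = v ∨ r v u by have := hr.trichotomous u v; tauto) with h | h | h
    · exact absurd h huv
    · exact absurd h hne_uv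
    · exact h
  have hba : r b a := by
    rcases (show r a b ∨ a = b ∨ r b a by have := hr.trichotomous a b; tauto) with h | h | h
    · exact absurd h hab
    · exact absurd h hne_ab
    · exact h
  have hne_ua : u ≠ a := by intro e; rw [e, haM] at huM; exact hne huM.symm
  rcases (show r u a ∨ u = a ∨ r a u by have := hr.trichotomous u a; tauto) with h | h | h
  · exact (hcontig M') ⟨v, hv, a, ha, u, (fun hc => hne ((huM.symm.trans hc))), hvu, h⟩
  · exact hne_ua h
  · exact (hcontig M) ⟨b, hb, u, hu, a, (fun hc => hne ((haM.symm.trans hc)).symm), hba, h⟩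

lemma modTransB (hr : IsStrictTotalOrder (Vtx n m s₁ s₂) r)
    (hs₁ : 0 < s₁) (hs₂ : 0 < s₂) {M M' M'' : ModName n m}
    (h1 : Before r (mset M) (mset M')) (h2 : Before r (mset M') (mset M'')) :
    Before r (mset M) (mset M'') := by
  intro u hu v hv
  exact hr.trans u ⟨M', ⟨0, mpos hs₁ hs₂ M'⟩⟩ v (h1 u hu _ rfl) (h2 _ rfl v hv)

/-- A pair of modules witnessing `s₁ * s₁` backward arcs. -/
def GoodPair (occ : Fin n → Fin m → Option Bool)
    (r : Vtx n m s₁ s₂ → Vtx n m s₁ s₂ → Prop) (p : ModName n m × ModName n m) : Prop :=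
  p.1 ≠ p.2 ∧ modArc occ p.1 p.2 ∧ Before r (mset p.2) (mset p.1) ∧
    s₁ ≤ msize n m s₁ s₂ p.1 ∧ s₁ ≤ msize n m s₁ s₂ p.2

/-- The three cyclically ordered pairs of the `D→E→F→D` cycle of group `i`. -/
def cyc (i : Fin n) : Finset (ModName n m × ModName n m) :=
  {(.D i, .E i), (.E i, .F i), (.F i, .D i)}

lemma cyc_spec (occ : Fin n → Fin m → Option Bool) {i : Fin n}
    {p : ModName n m × ModName n m} (h : p ∈ cyc i) :
    grp? p.1 = some i ∧ grp? p.2 = some i ∧ 3 ≤ rk p.1 ∧ p.1 ≠ p.2 ∧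
      modArc occ p.1 p.2 ∧ s₁ ≤ msize n m s₁ s₂ p.1 ∧ s₁ ≤ msize n m s₁ s₂ p.2 := by
  simp only [cyc, Finset.mem_insert, Finset.mem_singleton] at h
  rcases h with rfl | rfl | rfl
  · refine ⟨rfl, rfl, by norm_num [rk], by simp, ?_, le_refl _, ?_⟩
    · exact Or.inl ⟨i, i, rfl, rfl, Or.inr ⟨rfl, Or.inl ⟨by norm_num [rk], by simp [rk]⟩⟩⟩
    · simp only [msize]; split <;> omega
  · refine ⟨rfl, rfl, by norm_num [rk], by simp, ?_, ?_, le_refl _⟩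
    · exact Or.inl ⟨i, i, rfl, rfl, Or.inr ⟨rfl, Or.inl ⟨by norm_num [rk], by simp [rk]⟩⟩⟩
    · simp only [msize]; split <;> omega
  · refine ⟨rfl, rfl, by norm_num [rk], by simp, ?_, le_refl _, le_refl _⟩
    exact Or.inl ⟨i, i, rfl, rfl, Or.inr ⟨rfl, Or.inr ⟨rfl, rfl⟩⟩⟩

lemma cyc_rev (hr : IsStrictTotalOrder (Vtx n m s₁ s₂) r)
    (hcontig : ∀ M : ModName n m, Contig r (mset M))
    (hs₁ : 0 < s₁) (hs₂ : 0 < s₂) (i : Fin n) :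
    ∃ p ∈ (cyc i : Finset (ModName n m × ModName n m)),
      Before r (mset p.2) (mset p.1) := by
  rcases modTotal hr hcontig (show (ModName.D i : ModName n m) ≠ .E i by simp) with hDE | hED
  · rcases modTotal hr hcontig (show (ModName.E i : ModName n m) ≠ .F i by simp) with hEF | hFE
    · exact ⟨(.F i, .D i), by simp [cyc], modTransB hr hs₁ hs₂ hDE hEF⟩
    · exact ⟨(.E i, .F i), by simp [cyc], hFE⟩
  · exact ⟨(.D i, .E i), by simp [cyc], hED⟩

lemma cyc_rev2 (hr : IsStrictTotalOrder (Vtx n m s₁ s₂) r)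
    (hcontig : ∀ M : ModName n m, Contig r (mset M)) (i : Fin n)
    (hnc : ¬ ((Before r (mset (.D i)) (mset (.E i)) ∧ Before r (mset (.E i)) (mset (.F i))) ∨
      (Before r (mset (.E i)) (mset (.F i)) ∧ Before r (mset (.F i)) (mset (.D i))) ∨
      (Before r (mset (.F i)) (mset (.D i)) ∧ Before r (mset (.D i)) (mset (.E i))))) :
    ∃ p ∈ (cyc i : Finset (ModName n m × ModName n m)),
      ∃ q ∈ (cyc i : Finset (ModName n m × ModName n m)),
        p ≠ q ∧ Before r (mset p.2) (mset p.1) ∧ Before r (mset q.2) (mset q.1) := by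
  rcases modTotal hr hcontig (show (ModName.D i : ModName n m) ≠ .E i by simp) with hDE | hED <;>
    rcases modTotal hr hcontig (show (ModName.E i : ModName n m) ≠ .F i by simp) with hEF | hFE <;>
      rcases modTotal hr hcontig (show (ModName.F i : ModName n m) ≠ .D i by simp) with hFD | hDF
  · exact absurd (Or.inl ⟨hDE, hEF⟩) hnc
  · exact absurd (Or.inl ⟨hDE, hEF⟩) hnc
  · exact absurd (Or.inr (Or.inr ⟨hFD, hDE⟩)) hnc
  · exact ⟨(.E i, .F i), by simp [cyc], (.F i, .D i), by simp [cyc], by simp, hFE, hDF⟩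
  · exact absurd (Or.inr (Or.inl ⟨hEF, hFD⟩)) hnc
  · exact ⟨(.D i, .E i), by simp [cyc], (.F i, .D i), by simp [cyc], by simp, hED, hDF⟩
  · exact ⟨(.D i, .E i), by simp [cyc], (.E i, .F i), by simp [cyc], by simp, hED, hFE⟩
  · exact ⟨(.D i, .E i), by simp [cyc], (.E i, .F i), by simp [cyc], by simp, hED, hFE⟩

lemma modArc_same (occ : Fin n → Fin m → Option Bool) {M M' : ModName n m} {i : Fin n}
    (h1 : grp? M = some i) (h2 : grp? M' = some i) (h3 : rk M < rk M')
    (h4 : rk M ≠ 3 ∨ rk M' ≠ 5) : modArc occ M M' :=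
  Or.inl ⟨i, i, h1, h2, Or.inr ⟨rfl, Or.inl ⟨h3,
    fun hc => by rcases h4 with h | h; exact h hc.1; exact h hc.2⟩⟩⟩

lemma count_lemma (hs₁ : 0 < s₁) (hs₂ : 0 < s₂) (occ : Fin n → Fin m → Option Bool)
    (P : Finset (ModName n m × ModName n m))
    (hP : ∀ p ∈ P, GoodPair occ r p) :
    P.card * (s₁ * s₁) ≤ (fasSet (arc occ) r).ncard := by
  classical
  have hpos := mpos (n := n) (m := m) hs₁ hs₂
  set lift : ModName n m → Fin s₁ → Vtx n m s₁ s₂ :=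
    fun M a => ⟨M, ⟨min a.val (msize n m s₁ s₂ M - 1),
      lt_of_le_of_lt (min_le_right _ _) (Nat.sub_lt (hpos M) one_pos)⟩⟩ with hlift
  set g : (ModName n m × ModName n m) × (Fin s₁ × Fin s₁) → Vtx n m s₁ s₂ × Vtx n m s₁ s₂ :=
    fun x => (lift x.1.1 x.2.1, lift x.1.2 x.2.2) with hg
  have hsub : g '' ↑(P ×ˢ (Finset.univ : Finset (Fin s₁ × Fin s₁))) ⊆ fasSet (arc occ) r := by
    rintro q ⟨⟨⟨M, M'⟩, a, b⟩, hx, rfl⟩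
    rw [Finset.mem_coe, Finset.mem_product] at hx
    obtain ⟨hne, harc, hbef, _, _⟩ := hP _ hx.1
    exact ⟨Or.inr ⟨hne, harc⟩, hbef _ rfl _ rfl⟩
  have hinj : Set.InjOn g ↑(P ×ˢ (Finset.univ : Finset (Fin s₁ × Fin s₁))) := by
    rintro ⟨⟨M1, M2⟩, a1, a2⟩ hx ⟨⟨N1, N2⟩, b1, b2⟩ hy heq
    rw [Finset.mem_coe, Finset.mem_product] at hx hy
    obtain ⟨-, -, -, hx1, hx2⟩ := hP _ hx.1
    obtain ⟨-, -, -, hy1, hy2⟩ := hP _ hy.1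
    have h1 : lift M1 a1 = lift N1 b1 := congrArg Prod.fst heq
    have h2 : lift M2 a2 = lift N2 b2 := congrArg Prod.snd heq
    have hM1 : M1 = N1 := congrArg Sigma.fst h1
    have hM2 : M2 = N2 := congrArg Sigma.fst h2
    subst hM1; subst hM2
    have hv1 : min a1.val (msize n m s₁ s₂ M1 - 1) = min b1.val (msize n m s₁ s₂ M1 - 1) :=
      congrArg (fun v : Vtx n m s₁ s₂ => (v.2 : ℕ)) h1
    have hv2 : min a2.val (msize n m s₁ s₂ M2 - 1) = min b2.val (msize n m s₁ s₂ M2 - 1) :=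
      congrArg (fun v : Vtx n m s₁ s₂ => (v.2 : ℕ)) h2
    have hx1' : s₁ ≤ msize n m s₁ s₂ M1 := hx1
    have hx2' : s₁ ≤ msize n m s₁ s₂ M2 := hx2
    have ha1 := a1.isLt; have hb1 := b1.isLt
    have ha2 := a2.isLt; have hb2 := b2.isLt
    have e1 : a1 = b1 := Fin.ext (by omega)
    have e2 : a2 = b2 := Fin.ext (by omega)
    rw [e1, e2]
  have h1 : (g '' ↑(P ×ˢ (Finset.univ : Finset (Fin s₁ × Fin s₁)))).ncard
      = P.card * (s₁ * s₁) := by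
    rw [Set.ncard_image_of_injOn hinj, Set.ncard_coe_finset, Finset.card_product]
    simp
  calc P.card * (s₁ * s₁) = _ := h1.symm
    _ ≤ _ := Set.ncard_le_ncard hsub (Set.toFinite _)

end Aux

/-- If `s₁² > (3n−1)m·s₁·s₂ + 3n·s₁ + m²·s₂² + 9m(n−1)·s₂`, then every linear order
on the vertices of `T_φ` in which every module is contiguous and whose implied feedback
arc set has size at most `B = n·s₁² + (3n−1)m·s₁·s₂ + 3n·s₁ + m²·s₂² + 9m(n−1)·s₂`
is structured. -/
theorem stmt12 (n m s₁ s₂ : ℕ) (hn : 0 < n) (hm : 0 < m) (hs₁ : 0 < s₁) (hs₂ : 0 < s₂)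
    (occ : Fin n → Fin m → Option Bool)
    (h3lit : ∀ j : Fin m, ({i : Fin n | occ i j ≠ none}).ncard ≤ 3)
    (hallF : ∀ j : Fin m, ∃ i : Fin n, occ i j = some false)
    (hineq1 : s₁ ^ 2 > (3 * n - 1) * m * s₁ * s₂ + 3 * n * s₁ + m ^ 2 * s₂ ^ 2 +
      9 * m * (n - 1) * s₂)
    (r : Vtx n m s₁ s₂ → Vtx n m s₁ s₂ → Prop) (hr : IsStrictTotalOrder (Vtx n m s₁ s₂) r)
    (hcontig : ∀ M : ModName n m, Contig r (mset M))
    (hfas : (fasSet (arc occ) r).ncard ≤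
      n * s₁ ^ 2 + (3 * n - 1) * m * s₁ * s₂ + 3 * n * s₁ + m ^ 2 * s₂ ^ 2 +
        9 * m * (n - 1) * s₂) :
    Structured r := by
  classical
  by_contra hns
  -- Key finisher: `n+1` disjoint reversed module pairs give too many backward arcs.
  have key : ∀ p₀ : ModName n m × ModName n m, GoodPair occ r p₀ →
      ∀ c : Fin n → ModName n m × ModName n m,
        (∀ i, c i ∈ cyc i ∧ Before r (mset (c i).2) (mset (c i).1)) →
        (∀ i, c i ≠ p₀) → False := by
    intro p₀ hgood c hc hcp
    have hinj : Function.Injective c := by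
      intro i i' h
      have g1 := (cyc_spec (s₁ := s₁) (s₂ := s₂) occ (hc i).1).1
      have g2 := (cyc_spec (s₁ := s₁) (s₂ := s₂) occ (hc i').1).1
      rw [h] at g1
      rw [g1] at g2
      exact Option.some.inj g2
    have hnotmem : p₀ ∉ Finset.image c Finset.univ := by
      simp only [Finset.mem_image, Finset.mem_univ, true_and, not_exists]
      intro i h
      exact hcp i h
    have hcard : (insert p₀ (Finset.image c Finset.univ)).card = n + 1 := by
      rw [Finset.card_insert_of_notMem hnotmem,
        Finset.card_image_of_injective _ hinj, Finset.card_univ, Fintype.card_fin]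
    have hgoodall : ∀ p ∈ insert p₀ (Finset.image c Finset.univ), GoodPair occ r p := by
      intro p hp
      rw [Finset.mem_insert] at hp
      rcases hp with rfl | hp
      · exact hgood
      · obtain ⟨i, -, rfl⟩ := Finset.mem_image.1 hp
        obtain ⟨-, -, -, h4, h5, h6, h7⟩ := cyc_spec (s₁ := s₁) (s₂ := s₂) occ (hc i).1
        exact ⟨h4, h5, (hc i).2, h6, h7⟩
    have hcount := count_lemma hs₁ hs₂ occ _ hgoodall
    rw [hcard] at hcount
    have hle := hcount.trans hfas
    have hexp : (n + 1) * (s₁ * s₁) = n * s₁ ^ 2 + s₁ ^ 2 := by ring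
    rw [hexp] at hle
    linarith
  -- the default choice of a reversed cycle pair in each group
  have hchoice : ∀ i : Fin n, ∃ p ∈ (cyc i : Finset (ModName n m × ModName n m)),
      Before r (mset p.2) (mset p.1) := cyc_rev hr hcontig hs₁ hs₂
  choose c hc1 hc2 using hchoice
  by_cases h2 : ∀ i i' : Fin n, i < i' → Before r (gset i) (gset i')
  · by_cases h3 : ∀ i : Fin n,
        Before r (mset (.A i)) (mset (.B i)) ∧
        Before r (mset (.B i)) (mset (.C i)) ∧
        Before r (mset (.A i) ∪ mset (.B i) ∪ mset (.C i))
          (mset (.D i) ∪ mset (.E i) ∪ mset (.F i))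
    · by_cases h4 : ∀ i : Fin n,
          (Before r (mset (.D i)) (mset (.E i)) ∧ Before r (mset (.E i)) (mset (.F i))) ∨
          (Before r (mset (.E i)) (mset (.F i)) ∧ Before r (mset (.F i)) (mset (.D i))) ∨
          (Before r (mset (.F i)) (mset (.D i)) ∧ Before r (mset (.D i)) (mset (.E i)))
      · exact hns ⟨hcontig, h2, h3, h4⟩
      · -- some group violates the cyclic order of D, E, F
        rw [not_forall] at h4
        obtain ⟨i₀, hnc⟩ := h4
        obtain ⟨p₁, hp₁, p₂, hp₂, hne12, hrev1, hrev2⟩ := cyc_rev2 hr hcontig i₀ hnc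
        have hc' : ∀ i, Function.update c i₀ p₁ i ∈ cyc i ∧
            Before r (mset (Function.update c i₀ p₁ i).2) (mset (Function.update c i₀ p₁ i).1) := by
          intro i
          by_cases hi : i = i₀
          · subst hi; rw [Function.update_self]; exact ⟨hp₁, hrev1⟩
          · rw [Function.update_of_ne hi]; exact ⟨hc1 i, hc2 i⟩
        have hcp : ∀ i, Function.update c i₀ p₁ i ≠ p₂ := by
          intro i h
          by_cases hi : i = i₀
          · subst hi; rw [Function.update_self] at h; exact hne12 h
          · rw [Function.update_of_ne hi] at h
            have g1 := (cyc_spec (s₁ := s₁) (s₂ := s₂) occ (hc1 i)).1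
            have g2 := (cyc_spec (s₁ := s₁) (s₂ := s₂) occ hp₂).1
            rw [h, g2] at g1
            exact hi (Option.some.inj g1).symm
        obtain ⟨-, -, -, h4', h5', h6', h7'⟩ := cyc_spec (s₁ := s₁) (s₂ := s₂) occ hp₂
        exact key p₂ ⟨h4', h5', hrev2, h6', h7'⟩ _ hc' hcp
    · -- some group violates the A, B, C order
      rw [not_forall] at h3
      obtain ⟨i, hi⟩ := h3
      rcases not_and_or.mp hi with ha | hbc
      · have hrev : Before r (mset (ModName.B i) : Set (Vtx n m s₁ s₂)) (mset (.A i)) :=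
          (modTotal hr hcontig (by simp)).resolve_left ha
        refine key (.A i, .B i) ⟨by simp,
          modArc_same occ rfl rfl (by norm_num [rk]) (Or.inl (by norm_num [rk])),
          hrev, le_refl _, le_refl _⟩ c (fun i' => ⟨hc1 i', hc2 i'⟩) ?_
        intro i' h
        have h3r := (cyc_spec (s₁ := s₁) (s₂ := s₂) occ (hc1 i')).2.2.1
        rw [h] at h3r
        norm_num [rk] at h3r
      · rcases not_and_or.mp hbc with hb | hcc
        · have hrev : Before r (mset (ModName.C i) : Set (Vtx n m s₁ s₂)) (mset (.B i)) :=
            (modTotal hr hcontig (by simp)).resolve_left hb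
          refine key (.B i, .C i) ⟨by simp,
            modArc_same occ rfl rfl (by norm_num [rk]) (Or.inl (by norm_num [rk])),
            hrev, le_refl _, le_refl _⟩ c (fun i' => ⟨hc1 i', hc2 i'⟩) ?_
          intro i' h
          have h3r := (cyc_spec (s₁ := s₁) (s₂ := s₂) occ (hc1 i')).2.2.1
          rw [h] at h3r
          norm_num [rk] at h3r
        · simp only [Before, not_forall] at hcc
          obtain ⟨u, hu, v, hv, huv⟩ := hcc
          simp only [Set.mem_union, mset, Set.mem_setOf_eq] at hu hv
          obtain ⟨hgu1, hgu2⟩ : grp? u.1 = some i ∧ rk u.1 ≤ 2 := by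
            rcases hu with (hu | hu) | hu <;> rw [hu] <;> exact ⟨rfl, by norm_num [rk]⟩
          obtain ⟨hgv1, hgv2⟩ : grp? v.1 = some i ∧ 3 ≤ rk v.1 := by
            rcases hv with (hv | hv) | hv <;> rw [hv] <;> exact ⟨rfl, by norm_num [rk]⟩
          have hneM : u.1 ≠ v.1 := by
            intro e
            rw [e] at hgu2
            omega
          have hnb : ¬ Before r (mset u.1 : Set (Vtx n m s₁ s₂)) (mset v.1) :=
            fun h => huv (h u rfl v rfl)
          have hrev := (modTotal hr hcontig hneM).resolve_left hnb
          refine key (u.1, v.1) ⟨hneM,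
            modArc_same occ hgu1 hgv1 (show rk u.1 < rk v.1 by omega)
              (Or.inl (show rk u.1 ≠ 3 by omega)),
            hrev, size_of_grp hgu1, size_of_grp hgv1⟩ c (fun i' => ⟨hc1 i', hc2 i'⟩) ?_
          intro i' h
          have h3r := (cyc_spec (s₁ := s₁) (s₂ := s₂) occ (hc1 i')).2.2.1
          rw [h] at h3r
          have h3r' : 3 ≤ rk u.1 := h3r
          omega
  · -- two groups appear out of order
    push_neg at h2
    obtain ⟨i, i', hii', hnb⟩ := h2
    simp only [Before, not_forall] at hnb
    obtain ⟨u, hu, v, hv, huv⟩ := hnb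
    have hu' : grp? u.1 = some i := hu
    have hv' : grp? v.1 = some i' := hv
    have hneM : u.1 ≠ v.1 := by
      intro e
      rw [e, hv'] at hu'
      exact (Fin.ne_of_lt hii') (Option.some.inj hu').symm
    have hnb' : ¬ Before r (mset u.1 : Set (Vtx n m s₁ s₂)) (mset v.1) :=
      fun h => huv (h u rfl v rfl)
    have hrev := (modTotal hr hcontig hneM).resolve_left hnb'
    refine key (u.1, v.1) ⟨hneM, Or.inl ⟨i, i', hu', hv', Or.inl hii'⟩, hrev,
      size_of_grp hu', size_of_grp hv'⟩ c (fun i'' => ⟨hc1 i'', hc2 i''⟩) ?_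
    intro i'' h
    have g1 := (cyc_spec (s₁ := s₁) (s₂ := s₂) occ (hc1 i'')).1
    have g2 := (cyc_spec (s₁ := s₁) (s₂ := s₂) occ (hc1 i'')).2.1
    rw [h] at g1 g2
    have g1' : grp? u.1 = some i'' := g1
    have g2' : grp? v.1 = some i'' := g2
    rw [hu'] at g1'
    rw [hv'] at g2'
    exact absurd ((Option.some.inj g1').trans (Option.some.inj g2').symm) (Fin.ne_of_lt hii')
end
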